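/- arXiv:2407.04008 — 9 statements merged into one kernel-verified Lean document; each statement's English description precedes it below -/
import Mathlib

section
/- Every solution of the Robertson model with initial value (x₀, y₀, z₀) in the non-negative orthant ℝ³₊ exists globally in forward time and remains for all t ≥ 0 in the compact set K = {(x,y,z) ∈ ℝ³₊ : x + y + z = c}, where c = x₀ + y₀ + z₀. -/
open Set Filter Real Topology

namespace RobertsonAux


/-- Core invariance lemma. -/
theorem inv_core (T c L : ℝ) (hL : 0 < L)
    (x y z Dx Dy Dz : ℝ → ℝ)
    (hdx : ∀ t ∈ Icc (0:ℝ) T, HasDerivWithinAt x (Dx t) (Icc 0 T) t)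
    (hdy : ∀ t ∈ Icc (0:ℝ) T, HasDerivWithinAt y (Dy t) (Icc 0 T) t)
    (hdz : ∀ t ∈ Icc (0:ℝ) T, HasDerivWithinAt z (Dz t) (Icc 0 T) t)
    (hx0 : 0 ≤ x 0) (hy0 : 0 ≤ y 0) (hz0 : 0 ≤ z 0)
    (hc : x 0 + y 0 + z 0 = c)
    (hsum : ∀ t ∈ Icc (0:ℝ) T, Dx t + Dy t + Dz t = 0)
    (hqx : ∀ t ∈ Ico (0:ℝ) T, 0 < -x t → -x t ≤ 1 → -y t ≤ -x t → -z t ≤ -x t →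
      x t + y t + z t = c → -Dx t ≤ L * (-x t))
    (hqy : ∀ t ∈ Ico (0:ℝ) T, 0 < -y t → -y t ≤ 1 → -x t ≤ -y t → -z t ≤ -y t →
      x t + y t + z t = c → -Dy t ≤ L * (-y t))
    (hqz : ∀ t ∈ Ico (0:ℝ) T, 0 < -z t → -z t ≤ 1 → -x t ≤ -z t → -y t ≤ -z t →
      x t + y t + z t = c → -Dz t ≤ L * (-z t)) :
    ∀ t ∈ Icc (0:ℝ) T, 0 ≤ x t ∧ 0 ≤ y t ∧ 0 ≤ z t ∧ x t + y t + z t = c := by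
  classical
  rcases lt_or_ge T 0 with hT | hT
  · intro t ht; exact absurd (ht.1.trans ht.2) (not_le.2 hT)
  have hcx : ContinuousOn x (Icc 0 T) := fun t ht => (hdx t ht).continuousWithinAt
  have hcy : ContinuousOn y (Icc 0 T) := fun t ht => (hdy t ht).continuousWithinAt
  have hcz : ContinuousOn z (Icc 0 T) := fun t ht => (hdz t ht).continuousWithinAt
  -- conversion to right-derivatives
  have hIci : ∀ (f D : ℝ → ℝ), (∀ t ∈ Icc (0:ℝ) T, HasDerivWithinAt f (D t) (Icc 0 T) t) →
      ∀ t ∈ Ico (0:ℝ) T, HasDerivWithinAt f (D t) (Ici t) t := by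
    intro f D h t ht
    refine (h t (Ico_subset_Icc_self ht)).mono_of_mem_nhdsWithin ?_
    refine mem_of_superset (inter_mem self_mem_nhdsWithin
      (mem_nhdsWithin_of_mem_nhds (Iio_mem_nhds ht.2))) ?_
    rintro u ⟨hu1, hu2⟩
    exact ⟨le_trans ht.1 hu1, le_of_lt hu2⟩
  -- the sum is conserved
  have hconst : ∀ t ∈ Icc (0:ℝ) T, x t + y t + z t = c := by
    have hcont : ContinuousOn (fun t => x t + y t + z t) (Icc 0 T) := (hcx.add hcy).add hcz
    have hder : ∀ t ∈ Ico (0:ℝ) T,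
        HasDerivWithinAt (fun t => x t + y t + z t) 0 (Ici t) t := by
      intro t ht
      have h := ((hIci x Dx hdx t ht).add (hIci y Dy hdy t ht)).add (hIci z Dz hdz t ht)
      rwa [hsum t (Ico_subset_Icc_self ht)] at h
    intro t ht
    have h := constant_of_has_deriv_right_zero hcont hder t ht
    rw [h, hc]
  set φ : ℝ → ℝ := fun t => max (max (-x t) (-y t)) (-z t) with hφdef
  have hφc : ContinuousOn φ (Icc 0 T) := fun t ht =>
    Filter.Tendsto.max (Filter.Tendsto.max ((hcx t ht).neg) ((hcy t ht).neg)) ((hcz t ht).neg)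
  have hφ0 : φ 0 ≤ 0 :=
    max_le (max_le (by linarith) (by linarith)) (by linarith)
  set ψ : ℝ → ℝ := fun t =>
    max (max (if -x t = φ t then -Dx t else min (-Dx t) 0)
             (if -y t = φ t then -Dy t else min (-Dy t) 0))
        (if -z t = φ t then -Dz t else min (-Dz t) 0) with hψdef
  -- liminf slope bound
  have hslope : ∀ t ∈ Ico (0:ℝ) T, ∀ r, ψ t < r → ∀ᶠ u in 𝓝[>] t, slope φ t u < r := by
    intro t ht r hr
    have hpos : ∀ᶠ u in 𝓝[>] t, 0 < u - t := by
      filter_upwards [self_mem_nhdsWithin] with u hu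
      exact sub_pos.2 hu
    have key : ∀ (g D : ℝ → ℝ),
        (∀ s ∈ Icc (0:ℝ) T, HasDerivWithinAt g (D s) (Icc 0 T) s) →
        -g t ≤ φ t →
        (if -g t = φ t then -D t else min (-D t) 0) < r →
        ∀ᶠ u in 𝓝[>] t, -g u - φ t < r * (u - t) := by
      intro g D hD hle hcond
      have hderiv : HasDerivWithinAt (fun u => -g u) (-(D t)) (Ici t) t :=
        (hIci g D hD t ht).neg
      have htend : Tendsto (slope (fun u => -g u) t) (𝓝[>] t) (𝓝 (-(D t))) :=
        (hasDerivWithinAt_iff_tendsto_slope' (lt_irrefl t)).1 hderiv.Ioi_of_Ici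
      by_cases hact : -g t = φ t
      · rw [if_pos hact] at hcond
        filter_upwards [htend.eventually_lt_const hcond, hpos] with u hu hu'
        rw [slope_def_field, div_lt_iff₀ hu'] at hu
        calc -g u - φ t = -g u - -g t := by rw [hact]
          _ < r * (u - t) := hu
      · rw [if_neg hact] at hcond
        have hlt : -g t < φ t := lt_of_le_of_ne hle hact
        rcases lt_or_ge (-(D t)) r with hDr | hDr
        · filter_upwards [htend.eventually_lt_const hDr, hpos] with u hu hu'
          rw [slope_def_field, div_lt_iff₀ hu'] at hu
          have : -g u - φ t ≤ -g u - -g t := by linarith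
          linarith
        · have hr0 : 0 < r := by
            rcases min_cases (-(D t)) 0 with ⟨hm, _⟩ | ⟨hm, _⟩
            · rw [hm] at hcond; linarith
            · rwa [hm] at hcond
          have hcg : ContinuousWithinAt g (Icc 0 T) t :=
            (hD t (Ico_subset_Icc_self ht)).continuousWithinAt
          have hev : ∀ᶠ u in 𝓝[Icc (0:ℝ) T] t, -g u < φ t := by
            have : Tendsto (fun u => -g u) (𝓝[Icc (0:ℝ) T] t) (𝓝 (-g t)) := hcg.neg
            exact this.eventually_lt_const hlt
          have h2 : 𝓝[Ioo t T] t ≤ 𝓝[Icc (0:ℝ) T] t :=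
            nhdsWithin_mono t (fun u hu => ⟨ht.1.trans hu.1.le, hu.2.le⟩)
          have hev2 : ∀ᶠ u in 𝓝[Ioo t T] t, -g u < φ t := h2 hev
          have heq : 𝓝[Ioo t T] t = 𝓝[Ioi t] t ⊓ 𝓟 (Iio T) := by
            rw [← nhdsWithin_inter', Ioi_inter_Iio]
          rw [heq, eventually_inf_principal] at hev2
          filter_upwards [hev2, hpos, Ioo_mem_nhdsGT ht.2] with u hu hu' hu''
          have : -g u < φ t := hu hu''.2
          nlinarith
    rw [hψdef] at hr
    simp only [max_lt_iff] at hr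
    obtain ⟨⟨h1, h2⟩, h3⟩ := hr
    have k1 := key x Dx hdx (le_max_of_le_left (le_max_left _ _)) h1
    have k2 := key y Dy hdy (le_max_of_le_left (le_max_right _ _)) h2
    have k3 := key z Dz hdz (le_max_right _ _) h3
    filter_upwards [k1, k2, k3, hpos] with u e1 e2 e3 hu'
    rw [slope_def_field, div_lt_iff₀ hu']
    have : φ u < r * (u - t) + φ t := by
      apply max_lt (max_lt _ _) _ <;> linarith
    linarith
  -- Gronwall comparison with B t = ε * exp (2 L t)
  have hcomp : ∀ ε : ℝ, 0 < ε → ε ≤ Real.exp (-(2*L*T)) →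
      ∀ t ∈ Icc (0:ℝ) T, φ t ≤ ε * Real.exp (2*L*t) := by
    intro ε hε hεT
    have hB : ∀ u : ℝ, HasDerivAt (fun u => ε * Real.exp (2*L*u))
        (ε * (Real.exp (2*L*u) * (2*L))) u := by
      intro u
      have h1 : HasDerivAt (fun u : ℝ => 2*L*u) (2*L) u := by
        simpa using (hasDerivAt_id u).const_mul (2*L)
      exact (h1.exp).const_mul ε
    have hbound : ∀ u ∈ Ico (0:ℝ) T, φ u = ε * Real.exp (2*L*u) →
        ψ u < ε * (Real.exp (2*L*u) * (2*L)) := by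
      intro u hu hφu
      have hβpos : 0 < φ u := by
        rw [hφu]; positivity
      have hβ1 : φ u ≤ 1 := by
        rw [hφu]
        calc ε * Real.exp (2*L*u) ≤ Real.exp (-(2*L*T)) * Real.exp (2*L*T) := by
              apply mul_le_mul hεT (Real.exp_le_exp.2 (by nlinarith [hu.2.le, hu.1])) (Real.exp_pos _).le (Real.exp_pos _).le
          _ = 1 := by rw [← Real.exp_add]; ring_nf; exact Real.exp_zero
      have hsc : x u + y u + z u = c := hconst u (Ico_subset_Icc_self hu)
      have h2Lβ : L * φ u < ε * (Real.exp (2*L*u) * (2*L)) := by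
        have h5 : ε * (Real.exp (2*L*u) * (2*L)) = 2 * L * φ u := by rw [hφu]; ring
        rw [h5]; nlinarith
      have hxle : -x u ≤ φ u := le_max_of_le_left (le_max_left _ _)
      have hyle : -y u ≤ φ u := le_max_of_le_left (le_max_right _ _)
      have hzle : -z u ≤ φ u := le_max_right _ _
      rw [hψdef]
      apply max_lt (max_lt _ _) _
      · by_cases hax : -x u = φ u
        · rw [if_pos hax]
          refine lt_of_le_of_lt (hqx u hu (by rw [hax]; exact hβpos) (by rw [hax]; exact hβ1)
            (by rw [hax]; exact hyle) (by rw [hax]; exact hzle) hsc) ?_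
          rw [hax]; exact h2Lβ
        · rw [if_neg hax]
          calc min (-Dx u) 0 ≤ 0 := min_le_right _ _
            _ < _ := by nlinarith
      · by_cases hay : -y u = φ u
        · rw [if_pos hay]
          refine lt_of_le_of_lt (hqy u hu (by rw [hay]; exact hβpos) (by rw [hay]; exact hβ1)
            (by rw [hay]; exact hxle) (by rw [hay]; exact hzle) hsc) ?_
          rw [hay]; exact h2Lβ
        · rw [if_neg hay]
          calc min (-Dy u) 0 ≤ 0 := min_le_right _ _
            _ < _ := by nlinarith
      · by_cases haz : -z u = φ u
        · rw [if_pos haz]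
          refine lt_of_le_of_lt (hqz u hu (by rw [haz]; exact hβpos) (by rw [haz]; exact hβ1)
            (by rw [haz]; exact hxle) (by rw [haz]; exact hyle) hsc) ?_
          rw [haz]; exact h2Lβ
        · rw [if_neg haz]
          calc min (-Dz u) 0 ≤ 0 := min_le_right _ _
            _ < _ := by nlinarith
    have ha : φ 0 ≤ ε * Real.exp (2*L*0) := by
      have : (0:ℝ) < ε * Real.exp (2*L*0) := by positivity
      linarith
    exact fun t ht => image_le_of_liminf_slope_right_lt_deriv_boundary hφc
      (fun u hu r hr => ((hslope u hu r hr).frequently)) ha hB hbound ht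
  -- conclude φ ≤ 0
  have hφle : ∀ t ∈ Icc (0:ℝ) T, φ t ≤ 0 := by
    intro t ht
    by_contra hpos
    push_neg at hpos
    set ε := min (Real.exp (-(2*L*T))) (φ t / (2 * Real.exp (2*L*t))) with hε
    have hε1 : 0 < ε := lt_min (Real.exp_pos _) (by positivity)
    have := hcomp ε hε1 (min_le_left _ _) t ht
    have h2 : ε * Real.exp (2*L*t) ≤ (φ t / (2 * Real.exp (2*L*t))) * Real.exp (2*L*t) := by
      apply mul_le_mul_of_nonneg_right (min_le_right _ _) (Real.exp_pos _).le
    have h3 : (φ t / (2 * Real.exp (2*L*t))) * Real.exp (2*L*t) = φ t / 2 := by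
      field_simp
    nlinarith [this, h2, h3]
  intro t ht
  have h := hφle t ht
  have h1 : -x t ≤ 0 := le_trans (le_max_of_le_left (le_max_left _ _)) h
  have h2 : -y t ≤ 0 := le_trans (le_max_of_le_left (le_max_right _ _)) h
  have h3 : -z t ≤ 0 := le_trans (le_max_right _ _) h
  exact ⟨by linarith, by linarith, by linarith, hconst t ht⟩



/-- clamp to `[-1, c+2]` -/
noncomputable def gcl (c a : ℝ) : ℝ := max (min a (c+2)) (-1)

lemma neg_one_le_gcl (c a : ℝ) : -1 ≤ gcl c a := le_max_right _ _

lemma gcl_le (c a : ℝ) (hc : 0 ≤ c) : gcl c a ≤ c + 2 :=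
  max_le (min_le_right _ _) (by linarith)

lemma abs_gcl_le (c a : ℝ) (hc : 0 ≤ c) : |gcl c a| ≤ c + 2 :=
  abs_le.2 ⟨by have := neg_one_le_gcl c a; linarith, gcl_le c a hc⟩

lemma gcl_eq {c a : ℝ} (h1 : -1 ≤ a) (h2 : a ≤ c + 2) : gcl c a = a := by
  rw [gcl, min_eq_left h2, max_eq_left h1]

lemma gcl_lip (c a b : ℝ) : |gcl c a - gcl c b| ≤ |a - b| :=
  calc |gcl c a - gcl c b| ≤ |min a (c+2) - min b (c+2)| := abs_max_sub_max_le_abs _ _ _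
    _ ≤ max |a - b| |(c+2) - (c+2)| := abs_min_sub_min_le_max _ _ _ _
    _ = |a - b| := by simp

lemma abs_mul_sub {u v u' v' M : ℝ} (hu : |u| ≤ M) (hv' : |v'| ≤ M) :
    |u*v - u'*v'| ≤ M * |v - v'| + M * |u - u'| := by
  have h : u*v - u'*v' = u*(v - v') + v'*(u - u') := by ring
  rw [h]
  have t1 := abs_add_le (u * (v - v')) (v' * (u - u'))
  rw [abs_mul, abs_mul] at t1
  have t2 : |u| * |v - v'| ≤ M * |v - v'| := mul_le_mul_of_nonneg_right hu (abs_nonneg _)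
  have t3 : |v'| * |u - u'| ≤ M * |u - u'| := mul_le_mul_of_nonneg_right hv' (abs_nonneg _)
  linarith

/-- The clamped Robertson vector field. -/
noncomputable def Fv (k₁ k₂ k₃ c : ℝ) (p : ℝ × ℝ × ℝ) : ℝ × ℝ × ℝ :=
  (-k₁ * gcl c p.1 + k₃ * gcl c p.2.1 * gcl c p.2.2,
   k₁ * gcl c p.1 - k₂ * (gcl c p.2.1)^2 - k₃ * gcl c p.2.1 * gcl c p.2.2,
   k₂ * (gcl c p.2.1)^2)

lemma Fv_lipschitz (k₁ k₂ k₃ c : ℝ) (hk₁ : 0 < k₁) (hk₂ : 0 < k₂) (hk₃ : 0 < k₃) (hc : 0 ≤ c) :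
    LipschitzWith (Real.toNNReal (k₁ + 2*k₂*(c+2) + 2*k₃*(c+2))) (Fv k₁ k₂ k₃ c) := by
  have hK0 : (0:ℝ) ≤ k₁ + 2*k₂*(c+2) + 2*k₃*(c+2) := by nlinarith
  rw [lipschitzWith_iff_dist_le_mul]
  intro p q
  rw [Real.coe_toNNReal _ hK0]
  set D := dist p q with hD
  have hD0 : 0 ≤ D := dist_nonneg
  have h1 : |p.1 - q.1| ≤ D := by
    rw [← Real.dist_eq]; exact le_trans (le_max_left _ _) (le_of_eq Prod.dist_eq.symm)
  have h2 : |p.2.1 - q.2.1| ≤ D := by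
    rw [← Real.dist_eq]
    calc dist p.2.1 q.2.1 ≤ dist p.2 q.2 := le_trans (le_max_left _ _) (le_of_eq Prod.dist_eq.symm)
      _ ≤ D := le_trans (le_max_right _ _) (le_of_eq Prod.dist_eq.symm)
  have h3 : |p.2.2 - q.2.2| ≤ D := by
    rw [← Real.dist_eq]
    calc dist p.2.2 q.2.2 ≤ dist p.2 q.2 := le_trans (le_max_right _ _) (le_of_eq Prod.dist_eq.symm)
      _ ≤ D := le_trans (le_max_right _ _) (le_of_eq Prod.dist_eq.symm)
  have g1 : |gcl c p.1 - gcl c q.1| ≤ D := le_trans (gcl_lip _ _ _) h1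
  have g2 : |gcl c p.2.1 - gcl c q.2.1| ≤ D := le_trans (gcl_lip _ _ _) h2
  have g3 : |gcl c p.2.2 - gcl c q.2.2| ≤ D := le_trans (gcl_lip _ _ _) h3
  have b2 : |gcl c p.2.1| ≤ c + 2 := abs_gcl_le _ _ hc
  have b2' : |gcl c q.2.1| ≤ c + 2 := abs_gcl_le _ _ hc
  have b3' : |gcl c q.2.2| ≤ c + 2 := abs_gcl_le _ _ hc
  have hmul : |gcl c p.2.1 * gcl c p.2.2 - gcl c q.2.1 * gcl c q.2.2| ≤ 2 * (c+2) * D := by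
    calc _ ≤ (c+2) * |gcl c p.2.2 - gcl c q.2.2| + (c+2) * |gcl c p.2.1 - gcl c q.2.1| :=
          abs_mul_sub b2 b3'
      _ ≤ 2 * (c+2) * D := by nlinarith
  have hsq : |(gcl c p.2.1)^2 - (gcl c q.2.1)^2| ≤ 2 * (c+2) * D := by
    have h := abs_mul_sub (u := gcl c p.2.1) (v := gcl c p.2.1)
      (u' := gcl c q.2.1) (v' := gcl c q.2.1) b2 b2'
    calc |(gcl c p.2.1)^2 - (gcl c q.2.1)^2|
        = |gcl c p.2.1 * gcl c p.2.1 - gcl c q.2.1 * gcl c q.2.1| := by ring_nf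
      _ ≤ (c+2) * |gcl c p.2.1 - gcl c q.2.1| + (c+2) * |gcl c p.2.1 - gcl c q.2.1| := h
      _ ≤ 2 * (c+2) * D := by nlinarith
  rw [Prod.dist_eq]
  apply max_le
  · -- first component
    rw [Real.dist_eq]
    simp only [Fv]
    have heq : (-k₁ * gcl c p.1 + k₃ * gcl c p.2.1 * gcl c p.2.2) -
        (-k₁ * gcl c q.1 + k₃ * gcl c q.2.1 * gcl c q.2.2)
        = (-k₁) * (gcl c p.1 - gcl c q.1)
          + k₃ * (gcl c p.2.1 * gcl c p.2.2 - gcl c q.2.1 * gcl c q.2.2) := by ring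
    rw [heq]
    calc _ ≤ |(-k₁) * (gcl c p.1 - gcl c q.1)|
          + |k₃ * (gcl c p.2.1 * gcl c p.2.2 - gcl c q.2.1 * gcl c q.2.2)| := abs_add_le _ _
      _ = k₁ * |gcl c p.1 - gcl c q.1|
          + k₃ * |gcl c p.2.1 * gcl c p.2.2 - gcl c q.2.1 * gcl c q.2.2| := by
            rw [abs_mul, abs_mul, abs_neg, abs_of_pos hk₁, abs_of_pos hk₃]
      _ ≤ (k₁ + 2*k₂*(c+2) + 2*k₃*(c+2)) * D := by
            nlinarith [mul_le_mul_of_nonneg_left g1 hk₁.le,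
              mul_le_mul_of_nonneg_left hmul hk₃.le,
              mul_nonneg (mul_nonneg hk₂.le (by linarith : (0:ℝ) ≤ c + 2)) hD0]
  rw [Prod.dist_eq]
  apply max_le
  · -- second component
    rw [Real.dist_eq]
    simp only [Fv]
    have heq : (k₁ * gcl c p.1 - k₂ * (gcl c p.2.1)^2 - k₃ * gcl c p.2.1 * gcl c p.2.2) -
        (k₁ * gcl c q.1 - k₂ * (gcl c q.2.1)^2 - k₃ * gcl c q.2.1 * gcl c q.2.2)
        = k₁ * (gcl c p.1 - gcl c q.1) + (-k₂) * ((gcl c p.2.1)^2 - (gcl c q.2.1)^2)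
          + (-k₃) * (gcl c p.2.1 * gcl c p.2.2 - gcl c q.2.1 * gcl c q.2.2) := by ring
    rw [heq]
    calc _ ≤ |k₁ * (gcl c p.1 - gcl c q.1) + (-k₂) * ((gcl c p.2.1)^2 - (gcl c q.2.1)^2)|
          + |(-k₃) * (gcl c p.2.1 * gcl c p.2.2 - gcl c q.2.1 * gcl c q.2.2)| := abs_add_le _ _
      _ ≤ |k₁ * (gcl c p.1 - gcl c q.1)| + |(-k₂) * ((gcl c p.2.1)^2 - (gcl c q.2.1)^2)|
          + |(-k₃) * (gcl c p.2.1 * gcl c p.2.2 - gcl c q.2.1 * gcl c q.2.2)| := by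
            have := abs_add_le (k₁ * (gcl c p.1 - gcl c q.1))
              ((-k₂) * ((gcl c p.2.1)^2 - (gcl c q.2.1)^2))
            linarith
      _ = k₁ * |gcl c p.1 - gcl c q.1| + k₂ * |(gcl c p.2.1)^2 - (gcl c q.2.1)^2|
          + k₃ * |gcl c p.2.1 * gcl c p.2.2 - gcl c q.2.1 * gcl c q.2.2| := by
            rw [abs_mul, abs_mul, abs_mul, abs_neg, abs_neg, abs_of_pos hk₁, abs_of_pos hk₂,
              abs_of_pos hk₃]
      _ ≤ (k₁ + 2*k₂*(c+2) + 2*k₃*(c+2)) * D := by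
            nlinarith [mul_le_mul_of_nonneg_left g1 hk₁.le,
              mul_le_mul_of_nonneg_left hmul hk₃.le,
              mul_le_mul_of_nonneg_left hsq hk₂.le]
  · -- third component
    rw [Real.dist_eq]
    simp only [Fv]
    have heq : k₂ * (gcl c p.2.1)^2 - k₂ * (gcl c q.2.1)^2
        = k₂ * ((gcl c p.2.1)^2 - (gcl c q.2.1)^2) := by ring
    rw [heq, abs_mul, abs_of_pos hk₂]
    nlinarith [mul_le_mul_of_nonneg_left hsq hk₂.le,
      mul_nonneg (mul_nonneg hk₁.le (by linarith : (0:ℝ) ≤ c + 2)) hD0,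
      mul_nonneg (mul_nonneg hk₃.le (by linarith : (0:ℝ) ≤ c + 2)) hD0]

lemma Fv_norm_le (k₁ k₂ k₃ c : ℝ) (hk₁ : 0 < k₁) (hk₂ : 0 < k₂) (hk₃ : 0 < k₃) (hc : 0 ≤ c)
    (p : ℝ × ℝ × ℝ) :
    ‖Fv k₁ k₂ k₃ c p‖ ≤ k₁*(c+2) + k₂*(c+2)^2 + k₃*(c+2)^2 := by
  have b1 : |gcl c p.1| ≤ c + 2 := abs_gcl_le _ _ hc
  have b2 : |gcl c p.2.1| ≤ c + 2 := abs_gcl_le _ _ hc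
  have b3 : |gcl c p.2.2| ≤ c + 2 := abs_gcl_le _ _ hc
  have hmul : |gcl c p.2.1 * gcl c p.2.2| ≤ (c+2)^2 := by
    rw [abs_mul]
    calc |gcl c p.2.1| * |gcl c p.2.2| ≤ (c+2) * (c+2) :=
          mul_le_mul b2 b3 (abs_nonneg _) (by linarith)
      _ = (c+2)^2 := by ring
  have hsq : |(gcl c p.2.1)^2| ≤ (c+2)^2 := by
    rw [abs_pow]
    exact pow_le_pow_left₀ (abs_nonneg _) b2 2
  rw [Prod.norm_def]
  apply max_le
  · simp only [Fv, Real.norm_eq_abs]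
    calc |(-k₁ * gcl c p.1 + k₃ * gcl c p.2.1 * gcl c p.2.2)|
        ≤ |(-k₁) * gcl c p.1| + |k₃ * (gcl c p.2.1 * gcl c p.2.2)| := by
          have h' := abs_add_le ((-k₁) * gcl c p.1) (k₃ * (gcl c p.2.1 * gcl c p.2.2))
          have he : (-k₁) * gcl c p.1 + k₃ * (gcl c p.2.1 * gcl c p.2.2)
              = -k₁ * gcl c p.1 + k₃ * gcl c p.2.1 * gcl c p.2.2 := by ring
          rw [he] at h'
          exact h'
      _ = k₁ * |gcl c p.1| + k₃ * |gcl c p.2.1 * gcl c p.2.2| := by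
          rw [abs_mul, abs_mul, abs_neg, abs_of_pos hk₁, abs_of_pos hk₃]
      _ ≤ k₁*(c+2) + k₂*(c+2)^2 + k₃*(c+2)^2 := by nlinarith [sq_nonneg (c+2)]
  rw [Prod.norm_def]
  apply max_le
  · simp only [Fv, Real.norm_eq_abs]
    calc |k₁ * gcl c p.1 - k₂ * (gcl c p.2.1)^2 - k₃ * gcl c p.2.1 * gcl c p.2.2|
        ≤ |k₁ * gcl c p.1| + |k₂ * (gcl c p.2.1)^2| + |k₃ * gcl c p.2.1 * gcl c p.2.2| := by
          have ha := abs_sub (k₁ * gcl c p.1 - k₂ * (gcl c p.2.1)^2)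
            (k₃ * gcl c p.2.1 * gcl c p.2.2)
          have hb := abs_sub (k₁ * gcl c p.1) (k₂ * (gcl c p.2.1)^2)
          linarith
      _ = k₁ * |gcl c p.1| + k₂ * |(gcl c p.2.1)^2| + k₃ * |gcl c p.2.1 * gcl c p.2.2| := by
          rw [abs_mul, abs_mul, mul_assoc, abs_mul, abs_of_pos hk₁, abs_of_pos hk₂, abs_of_pos hk₃]
      _ ≤ k₁*(c+2) + k₂*(c+2)^2 + k₃*(c+2)^2 := by nlinarith
  · simp only [Fv, Real.norm_eq_abs]
    rw [abs_mul, abs_of_pos hk₂]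
    nlinarith [abs_nonneg ((gcl c p.2.1)^2), mul_pos hk₁ (by linarith : (0:ℝ) < c + 2)]



lemma qx (k₁ k₂ k₃ c a b d : ℝ) (hk₁ : 0 < k₁) (hk₂ : 0 < k₂) (hk₃ : 0 < k₃) (hc : 0 ≤ c)
    (h0 : 0 < -a) (h1 : -a ≤ 1) (hb : -b ≤ -a) (hd : -d ≤ -a) (hs : a + b + d = c) :
    -(-k₁ * a + k₃ * b * d) ≤ (k₁ + k₂ + k₃*(2*c+6) + 1) * (-a) := by
  nlinarith [mul_nonneg hk₃.le (mul_nonneg (by linarith : (0:ℝ) ≤ b - a)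
      (by linarith : (0:ℝ) ≤ d - a)),
    mul_pos hk₁ h0, mul_pos hk₂ h0, mul_pos hk₃ h0,
    mul_nonneg (mul_pos hk₃ h0).le (by linarith : (0:ℝ) ≤ 1 - -a),
    mul_nonneg (mul_pos hk₃ h0).le hc, h0.le]

lemma qy (k₁ k₂ k₃ c a b d : ℝ) (hk₁ : 0 < k₁) (hk₂ : 0 < k₂) (hk₃ : 0 < k₃) (hc : 0 ≤ c)
    (h0 : 0 < -b) (h1 : -b ≤ 1) (ha : -a ≤ -b) (hd : -d ≤ -b) (hs : a + b + d = c) :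
    -(k₁ * a - k₂ * b^2 - k₃ * b * d) ≤ (k₁ + k₂ + k₃*(2*c+6) + 1) * (-b) := by
  nlinarith [mul_nonneg hk₁.le (by linarith : (0:ℝ) ≤ a - b),
    mul_nonneg (mul_pos hk₂ h0).le (by linarith : (0:ℝ) ≤ 1 + b),
    mul_nonneg (mul_pos hk₃ h0).le (by linarith : (0:ℝ) ≤ d - b),
    mul_nonneg (mul_pos hk₃ h0).le (by linarith : (0:ℝ) ≤ 1 + b),
    mul_nonneg (mul_pos hk₃ h0).le hc, mul_pos hk₁ h0, mul_pos hk₂ h0, mul_pos hk₃ h0, h0.le]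

lemma qz (k₁ k₂ k₃ c a b d : ℝ) (hk₁ : 0 < k₁) (hk₂ : 0 < k₂) (hk₃ : 0 < k₃) (hc : 0 ≤ c)
    (h0 : 0 < -d) (h1 : -d ≤ 1) (ha : -a ≤ -d) (hb : -b ≤ -d) (hs : a + b + d = c) :
    -(k₂ * b^2) ≤ (k₁ + k₂ + k₃*(2*c+6) + 1) * (-d) := by
  nlinarith [mul_nonneg hk₂.le (sq_nonneg b), mul_nonneg (mul_pos hk₃ h0).le hc,
    mul_pos hk₃ h0, mul_pos hk₁ h0, mul_pos hk₂ h0, h0.le]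


end RobertsonAux

open RobertsonAux

/-- Every solution of the Robertson model with initial value in the non-negative
orthant exists globally in forward time and remains for all t ≥ 0 in the compact
set K = {(x,y,z) ∈ ℝ³₊ : x + y + z = c}, where c = x₀ + y₀ + z₀.  This is stated
as: (i) there exists a global forward solution with this initial value staying in K,
and (ii) every solution with this initial value, on any forward interval of
existence [0,T], stays in K. -/
theorem robertson_global_existence_in_K
    (k₁ k₂ k₃ : ℝ) (hk₁ : 0 < k₁) (hk₂ : 0 < k₂) (hk₃ : 0 < k₃)
    (x₀ y₀ z₀ : ℝ) (hx₀ : 0 ≤ x₀) (hy₀ : 0 ≤ y₀) (hz₀ : 0 ≤ z₀) :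
    (∃ x y z : ℝ → ℝ, x 0 = x₀ ∧ y 0 = y₀ ∧ z 0 = z₀ ∧
      (∀ t ≥ (0 : ℝ), HasDerivAt x (-k₁ * x t + k₃ * y t * z t) t) ∧
      (∀ t ≥ (0 : ℝ), HasDerivAt y (k₁ * x t - k₂ * (y t) ^ 2 - k₃ * y t * z t) t) ∧
      (∀ t ≥ (0 : ℝ), HasDerivAt z (k₂ * (y t) ^ 2) t) ∧
      (∀ t ≥ (0 : ℝ), 0 ≤ x t ∧ 0 ≤ y t ∧ 0 ≤ z t ∧
        x t + y t + z t = x₀ + y₀ + z₀)) ∧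
    (∀ T : ℝ, ∀ x y z : ℝ → ℝ, x 0 = x₀ → y 0 = y₀ → z 0 = z₀ →
      (∀ t ∈ Set.Icc (0 : ℝ) T,
        HasDerivWithinAt x (-k₁ * x t + k₃ * y t * z t) (Set.Icc 0 T) t) →
      (∀ t ∈ Set.Icc (0 : ℝ) T,
        HasDerivWithinAt y (k₁ * x t - k₂ * (y t) ^ 2 - k₃ * y t * z t) (Set.Icc 0 T) t) →
      (∀ t ∈ Set.Icc (0 : ℝ) T,
        HasDerivWithinAt z (k₂ * (y t) ^ 2) (Set.Icc 0 T) t) →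
      ∀ t ∈ Set.Icc (0 : ℝ) T, 0 ≤ x t ∧ 0 ≤ y t ∧ 0 ≤ z t ∧
        x t + y t + z t = x₀ + y₀ + z₀) := by
  have hc : (0:ℝ) ≤ x₀ + y₀ + z₀ := by linarith
  set c : ℝ := x₀ + y₀ + z₀ with hcdef
  set L₀ : ℝ := k₁ + k₂ + k₃*(2*c+6) + 1 with hL₀def
  have hL₀ : 0 < L₀ := by
    have : 0 < k₃ * (2*c+6) := mul_pos hk₃ (by linarith)
    simp only [hL₀def]; linarith
  constructor
  · -- existence
    set p₀ : ℝ × ℝ × ℝ := (x₀, y₀, z₀) with hp₀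
    have hlip := Fv_lipschitz k₁ k₂ k₃ c hk₁ hk₂ hk₃ hc
    set C₀ : ℝ := k₁*(c+2) + k₂*(c+2)^2 + k₃*(c+2)^2 with hC₀def
    have hC₀ : 0 ≤ C₀ := by
      simp only [hC₀def]
      nlinarith [sq_nonneg (c+2)]
    have h0mem : ∀ n : ℕ, (0:ℝ) ∈ Icc (-(n+1:ℝ)) (n+1) := fun n => by
      have hn : (0:ℝ) ≤ n := n.cast_nonneg
      exact ⟨by linarith, by linarith⟩
    have hPL : ∀ n : ℕ, IsPicardLindelof (fun _ p => Fv k₁ k₂ k₃ c p)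
        (tmin := -(n+1:ℝ)) (tmax := n+1) ⟨0, h0mem n⟩ p₀
        (Real.toNNReal (C₀*(n+1)+1)) 0 (Real.toNNReal C₀)
        (Real.toNNReal (k₁ + 2*k₂*(c+2) + 2*k₃*(c+2))) := by
      intro n
      have hn : (0:ℝ) ≤ n := n.cast_nonneg
      refine ⟨?_, ?_, ?_, ?_⟩
      · exact fun t _ => hlip.lipschitzOnWith
      · exact fun p _ => continuousOn_const
      · intro t _ p _
        rw [Real.coe_toNNReal _ hC₀]
        exact Fv_norm_le k₁ k₂ k₃ c hk₁ hk₂ hk₃ hc p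
      · simp only [sub_zero, zero_sub, neg_neg, max_self, NNReal.coe_zero, Real.coe_toNNReal _ hC₀,
          Real.coe_toNNReal _ (by positivity : (0:ℝ) ≤ C₀*(n+1)+1)]
        nlinarith
    have hsol : ∀ n : ℕ, ∃ f : ℝ → ℝ × ℝ × ℝ, f 0 = p₀ ∧
        ∀ t ∈ Icc (-(n+1:ℝ)) (n+1),
          HasDerivWithinAt f (Fv k₁ k₂ k₃ c (f t)) (Icc (-(n+1:ℝ)) (n+1)) t :=
      fun n => (hPL n).exists_eq_forall_mem_Icc_hasDerivWithinAt₀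
    choose Fn hFn0 hFnd using hsol
    have huniq : ∀ m n : ℕ, m ≤ n → EqOn (Fn m) (Fn n) (Icc (-(m+1:ℝ)) (m+1)) := by
      intro m n hmn
      have hmn' : (m:ℝ) ≤ n := Nat.cast_le.2 hmn
      have hsub : Icc (-(m+1:ℝ)) (m+1) ⊆ Icc (-(n+1:ℝ)) (n+1) :=
        Icc_subset_Icc (by linarith) (by linarith)
      have hm0 : (0:ℝ) ∈ Ioo (-(m+1:ℝ)) (m+1) := by
        have : (0:ℝ) ≤ (m:ℝ) := Nat.cast_nonneg m
        constructor <;> linarith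
      refine ODE_solution_unique_of_mem_Icc
        (v := fun _ p => Fv k₁ k₂ k₃ c p) (s := fun _ => univ)
        (fun _ _ => hlip.lipschitzOnWith) hm0
        (fun t ht => (hFnd m t ht).continuousWithinAt)
        (fun t ht => (hFnd m t (Ioo_subset_Icc_self ht)).hasDerivAt
          (Icc_mem_nhds ht.1 ht.2))
        (fun _ _ => mem_univ _)
        (fun t ht => ((hFnd n t (hsub ht)).continuousWithinAt).mono hsub)
        (fun t ht => (hFnd n t (hsub (Ioo_subset_Icc_self ht))).hasDerivAt
          (Icc_mem_nhds (by linarith [ht.1]) (by linarith [ht.2])))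
        (fun _ _ => mem_univ _)
        (by rw [hFn0, hFn0])
    set G : ℝ → ℝ × ℝ × ℝ := fun t => Fn ⌈|t|⌉₊ t with hGdef
    have hGeq : ∀ n : ℕ, ∀ t ∈ Icc (-(n+1:ℝ)) (n+1), G t = Fn n t := by
      intro n t ht
      have habs := abs_le.1 (Nat.le_ceil |t|)
      have htm : t ∈ Icc (-((⌈|t|⌉₊:ℝ)+1)) ((⌈|t|⌉₊:ℝ)+1) := by
        constructor <;> linarith [habs.1, habs.2]
      have h1 := huniq ⌈|t|⌉₊ (max ⌈|t|⌉₊ n) (le_max_left _ _) htm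
      have h2 := huniq n (max ⌈|t|⌉₊ n) (le_max_right _ _) ht
      simp only [hGdef]
      rw [h1, h2]
    have hG0 : G 0 = p₀ := by
      simp only [hGdef]
      exact hFn0 _
    have hGd : ∀ t : ℝ, HasDerivAt G (Fv k₁ k₂ k₃ c (G t)) t := by
      intro t
      have habs := abs_le.1 (Nat.le_ceil |t|)
      have htIoo : t ∈ Ioo (-((⌈|t|⌉₊:ℝ)+1)) ((⌈|t|⌉₊:ℝ)+1) := by
        constructor <;> linarith [habs.1, habs.2]
      have hd := (hFnd ⌈|t|⌉₊ t (Ioo_subset_Icc_self htIoo)).hasDerivAt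
        (Icc_mem_nhds htIoo.1 htIoo.2)
      have hev : G =ᶠ[𝓝 t] Fn ⌈|t|⌉₊ :=
        Filter.eventuallyEq_of_mem (Icc_mem_nhds htIoo.1 htIoo.2) (hGeq ⌈|t|⌉₊)
      have hfin := hd.congr_of_eventuallyEq hev
      rw [hGeq ⌈|t|⌉₊ t (Ioo_subset_Icc_self htIoo)]
      exact hfin
    -- components
    have hcomp1 : ∀ t : ℝ, HasDerivAt (fun s => (G s).1) (Fv k₁ k₂ k₃ c (G t)).1 t := by
      intro t
      have h := ((hGd t).hasFDerivAt.fst).hasDerivAt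
      simpa using h
    have hcomp2 : ∀ t : ℝ, HasDerivAt (fun s => (G s).2.1) (Fv k₁ k₂ k₃ c (G t)).2.1 t := by
      intro t
      have h := (((hGd t).hasFDerivAt.snd).fst).hasDerivAt
      simpa using h
    have hcomp3 : ∀ t : ℝ, HasDerivAt (fun s => (G s).2.2) (Fv k₁ k₂ k₃ c (G t)).2.2 t := by
      intro t
      have h := (((hGd t).hasFDerivAt.snd).snd).hasDerivAt
      simpa using h
    -- invariance
    have hInv : ∀ t : ℝ, 0 ≤ t →
        0 ≤ (G t).1 ∧ 0 ≤ (G t).2.1 ∧ 0 ≤ (G t).2.2 ∧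
          (G t).1 + (G t).2.1 + (G t).2.2 = c := by
      intro τ hτ
      refine inv_core τ c L₀ hL₀ (fun s => (G s).1) (fun s => (G s).2.1) (fun s => (G s).2.2)
        (fun s => (Fv k₁ k₂ k₃ c (G s)).1) (fun s => (Fv k₁ k₂ k₃ c (G s)).2.1)
        (fun s => (Fv k₁ k₂ k₃ c (G s)).2.2)
        (fun t _ => (hcomp1 t).hasDerivWithinAt)
        (fun t _ => (hcomp2 t).hasDerivWithinAt)
        (fun t _ => (hcomp3 t).hasDerivWithinAt)
        (by beta_reduce; rw [hG0]; exact hx₀) (by beta_reduce; rw [hG0]; exact hy₀)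
        (by beta_reduce; rw [hG0]; exact hz₀) (by beta_reduce; rw [hG0])
        (fun t _ => by simp only [Fv]; ring)
        ?_ ?_ ?_ τ ⟨hτ, le_refl τ⟩
      · intro t _ h0 h1 hb hd hs
        beta_reduce at h0 h1 hb hd hs ⊢
        set a := (G t).1; set b := (G t).2.1; set d := (G t).2.2
        have e1 : gcl c a = a := gcl_eq (by linarith) (by linarith)
        have e2 : gcl c b = b := gcl_eq (by linarith) (by linarith)
        have e3 : gcl c d = d := gcl_eq (by linarith) (by linarith)
        have : (Fv k₁ k₂ k₃ c (G t)).1 = -k₁ * a + k₃ * b * d := by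
          simp only [Fv]; rw [e1, e2, e3]
        rw [this]
        exact qx k₁ k₂ k₃ c a b d hk₁ hk₂ hk₃ hc h0 h1 hb hd hs
      · intro t _ h0 h1 ha hd hs
        beta_reduce at h0 h1 ha hd hs ⊢
        set a := (G t).1; set b := (G t).2.1; set d := (G t).2.2
        have e1 : gcl c a = a := gcl_eq (by linarith) (by linarith)
        have e2 : gcl c b = b := gcl_eq (by linarith) (by linarith)
        have e3 : gcl c d = d := gcl_eq (by linarith) (by linarith)
        have : (Fv k₁ k₂ k₃ c (G t)).2.1 = k₁ * a - k₂ * b^2 - k₃ * b * d := by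
          simp only [Fv]; rw [e1, e2, e3]
        rw [this]
        exact qy k₁ k₂ k₃ c a b d hk₁ hk₂ hk₃ hc h0 h1 ha hd hs
      · intro t _ h0 h1 ha hb hs
        beta_reduce at h0 h1 ha hb hs ⊢
        set a := (G t).1; set b := (G t).2.1; set d := (G t).2.2
        have e2 : gcl c b = b := gcl_eq (by linarith) (by linarith)
        have : (Fv k₁ k₂ k₃ c (G t)).2.2 = k₂ * b^2 := by
          simp only [Fv]; rw [e2]
        rw [this]
        exact qz k₁ k₂ k₃ c a b d hk₁ hk₂ hk₃ hc h0 h1 ha hb hs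
    refine ⟨fun t => (G t).1, fun t => (G t).2.1, fun t => (G t).2.2,
      by beta_reduce; rw [hG0], by beta_reduce; rw [hG0], by beta_reduce; rw [hG0],
      ?_, ?_, ?_, fun t ht => hInv t ht⟩
    · intro t ht
      obtain ⟨ha, hb, hd, hs⟩ := hInv t ht
      have e1 : gcl c ((G t).1) = (G t).1 := gcl_eq (by linarith) (by linarith)
      have e2 : gcl c ((G t).2.1) = (G t).2.1 := gcl_eq (by linarith) (by linarith)
      have e3 : gcl c ((G t).2.2) = (G t).2.2 := gcl_eq (by linarith) (by linarith)
      have heq : (Fv k₁ k₂ k₃ c (G t)).1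
          = -k₁ * (G t).1 + k₃ * (G t).2.1 * (G t).2.2 := by
        simp only [Fv]; rw [e1, e2, e3]
      exact heq ▸ hcomp1 t
    · intro t ht
      obtain ⟨ha, hb, hd, hs⟩ := hInv t ht
      have e1 : gcl c ((G t).1) = (G t).1 := gcl_eq (by linarith) (by linarith)
      have e2 : gcl c ((G t).2.1) = (G t).2.1 := gcl_eq (by linarith) (by linarith)
      have e3 : gcl c ((G t).2.2) = (G t).2.2 := gcl_eq (by linarith) (by linarith)
      have heq : (Fv k₁ k₂ k₃ c (G t)).2.1
          = k₁ * (G t).1 - k₂ * ((G t).2.1)^2 - k₃ * (G t).2.1 * (G t).2.2 := by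
        simp only [Fv]; rw [e1, e2, e3]
      exact heq ▸ hcomp2 t
    · intro t ht
      obtain ⟨ha, hb, hd, hs⟩ := hInv t ht
      have e2 : gcl c ((G t).2.1) = (G t).2.1 := gcl_eq (by linarith) (by linarith)
      have heq : (Fv k₁ k₂ k₃ c (G t)).2.2 = k₂ * ((G t).2.1)^2 := by
        simp only [Fv]; rw [e2]
      exact heq ▸ hcomp3 t
  · -- invariance of arbitrary solutions
    intro T x y z hx0 hy0 hz0 hdx hdy hdz
    refine inv_core T c L₀ hL₀ x y z
      (fun t => -k₁ * x t + k₃ * y t * z t)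
      (fun t => k₁ * x t - k₂ * (y t)^2 - k₃ * y t * z t)
      (fun t => k₂ * (y t)^2)
      hdx hdy hdz (by rw [hx0]; exact hx₀) (by rw [hy0]; exact hy₀) (by rw [hz0]; exact hz₀)
      (by rw [hx0, hy0, hz0])
      (fun t _ => by ring)
      (fun t _ h0 h1 hb hd hs => qx k₁ k₂ k₃ c (x t) (y t) (z t) hk₁ hk₂ hk₃ hc h0 h1 hb hd hs)
      (fun t _ h0 h1 ha hd hs => qy k₁ k₂ k₃ c (x t) (y t) (z t) hk₁ hk₂ hk₃ hc h0 h1 ha hd hs)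
      (fun t _ h0 h1 ha hb hs => qz k₁ k₂ k₃ c (x t) (y t) (z t) hk₁ hk₂ hk₃ hc h0 h1 ha hb hs)
end

section
/- Every solution of the Robertson model with initial value (x₀, y₀, z₀) in the non-negative orthant ℝ³₊ converges as t → ∞ to the equilibrium (0, 0, c), where c = x₀ + y₀ + z₀. -/
open Set Filter


open Set Filter

/-- Antitone on a convex subset of `[a,∞)` from nonpositive derivative. -/
lemma myAntitoneOn {a : ℝ} {D : Set ℝ} (hD : Convex ℝ D) (hDa : D ⊆ Set.Ici a)
    {f f' : ℝ → ℝ} (hf : ∀ t ≥ a, HasDerivAt f (f' t) t)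
    (h0 : ∀ t ∈ interior D, f' t ≤ 0) : AntitoneOn f D := by
  refine antitoneOn_of_hasDerivWithinAt_nonpos (f' := f') hD
    (fun t ht => (hf t (hDa ht)).continuousAt.continuousWithinAt)
    (fun t ht => ((hf t (hDa (interior_subset ht))).hasDerivWithinAt)) h0

lemma myMonotoneOn {a : ℝ} {D : Set ℝ} (hD : Convex ℝ D) (hDa : D ⊆ Set.Ici a)
    {f f' : ℝ → ℝ} (hf : ∀ t ≥ a, HasDerivAt f (f' t) t)
    (h0 : ∀ t ∈ interior D, 0 ≤ f' t) : MonotoneOn f D := by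
  refine monotoneOn_of_hasDerivWithinAt_nonneg (f' := f') hD
    (fun t ht => (hf t (hDa ht)).continuousAt.continuousWithinAt)
    (fun t ht => ((hf t (hDa (interior_subset ht))).hasDerivWithinAt)) h0

/-- derivative of the squared negative part -/
lemma negpart_sq_hasDerivAt (u₀ : ℝ) :
    HasDerivAt (fun u : ℝ => max (-u) 0 ^ 2) (-(2 * max (-u₀) 0)) u₀ := by
  rcases lt_trichotomy u₀ 0 with h | h | h
  · have : HasDerivAt (fun u : ℝ => u ^ 2) (2 * u₀) u₀ := by
      simpa using (hasDerivAt_pow 2 u₀)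
    have heq : (fun u : ℝ => max (-u) 0 ^ 2) =ᶠ[nhds u₀] fun u => u ^ 2 := by
      filter_upwards [Iio_mem_nhds h] with u hu
      simp only [Set.mem_Iio] at hu
      have : max (-u) 0 = -u := max_eq_left (by linarith)
      rw [this]; ring
    have := this.congr_of_eventuallyEq heq
    refine this.congr_deriv ?_
    rw [max_eq_left (by linarith)]; ring
  · subst h
    rw [hasDerivAt_iff_isLittleO]
    simp only [max_eq_right le_rfl, neg_zero, ne_eq, OfNat.ofNat_ne_zero,
      not_false_eq_true, zero_pow, smul_eq_mul, mul_zero, sub_zero]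
    rw [Asymptotics.isLittleO_iff]
    intro c hc
    filter_upwards [Metric.ball_mem_nhds (0:ℝ) hc] with u hu
    simp only [Metric.mem_ball, Real.dist_eq, sub_zero] at hu
    have h1 : max (-u) 0 ^ 2 ≤ u ^ 2 := by
      rcases le_total u 0 with h | h
      · rw [max_eq_left (by linarith)]; ring_nf; exact le_rfl
      · rw [max_eq_right (by linarith)]; simpa using sq_nonneg u
    have h2 : ‖max (-u) 0 ^ 2‖ ≤ u ^ 2 := by
      rw [Real.norm_eq_abs, abs_of_nonneg (sq_nonneg _)]; exact h1
    refine h2.trans ?_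
    rw [Real.norm_eq_abs]
    have h3 : u ^ 2 = |u| * |u| := by rw [← sq_abs u]; ring
    rw [h3]
    exact mul_le_mul_of_nonneg_right hu.le (abs_nonneg u)
  · have heq : (fun u : ℝ => max (-u) 0 ^ 2) =ᶠ[nhds u₀] fun _ => (0:ℝ) := by
      filter_upwards [Ioi_mem_nhds h] with u hu
      simp only [Set.mem_Ioi] at hu
      rw [max_eq_right (by linarith)]; ring
    have := (hasDerivAt_const u₀ (0:ℝ)).congr_of_eventuallyEq heq
    refine this.congr_deriv ?_
    rw [max_eq_right (by linarith)]; ring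

lemma key_bound {k₁ k₂ k₃ a b X Y Z M : ℝ} (hk₁ : 0 ≤ k₁) (hk₂ : 0 ≤ k₂) (hk₃ : 0 ≤ k₃)
    (ha : 0 ≤ a) (hb : 0 ≤ b) (haX : a * X = -a^2) (hbY : b * Y = -b^2)
    (hXa : -X ≤ a) (hYb : -Y ≤ b) (hZ : 0 ≤ Z) (hZM : Z ≤ M) (hbM : b ≤ M) :
    -(2*a) * (-k₁*X + k₃*Y*Z) + -(2*b) * (k₁*X - k₂*Y^2 - k₃*Y*Z)
      ≤ (k₁ + k₃*M + 2*k₂*M) * (a^2 + b^2) := by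
  have hM : 0 ≤ M := le_trans hZ hZM
  have lhs_eq : -(2*a) * (-k₁*X + k₃*Y*Z) + -(2*b) * (k₁*X - k₂*Y^2 - k₃*Y*Z)
      = -2*k₁*a^2 - 2*k₃*(a*Y*Z) - 2*k₁*(b*X) - 2*k₂*(b^2*Y) - 2*k₃*(b^2*Z) := by
    linear_combination (2*k₁)*haX + (2*k₂*Y + 2*k₃*Z)*hbY
  rw [lhs_eq]
  have t2 : -(2*k₃)*(a*Y*Z) ≤ k₃*M*(a^2+b^2) := by
    have h1 : 0 ≤ k₃*(a*Z)*(b+Y) := mul_nonneg (mul_nonneg hk₃ (mul_nonneg ha hZ)) (by linarith)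
    have h2 : 0 ≤ k₃*(a*b)*(M-Z) := mul_nonneg (mul_nonneg hk₃ (mul_nonneg ha hb)) (by linarith)
    have h3 : 0 ≤ k₃*M*(a-b)^2 := mul_nonneg (mul_nonneg hk₃ hM) (sq_nonneg _)
    nlinarith [h1, h2, h3]
  have t3 : -(2*k₁)*(b*X) ≤ k₁*(a^2+b^2) := by
    have h1 : 0 ≤ k₁*b*(a+X) := mul_nonneg (mul_nonneg hk₁ hb) (by linarith)
    have h2 : 0 ≤ k₁*(a-b)^2 := mul_nonneg hk₁ (sq_nonneg _)
    nlinarith [h1, h2]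
  have t4 : -(2*k₂)*(b^2*Y) ≤ 2*k₂*M*b^2 := by
    have h1 : 0 ≤ k₂*b^2*(b+Y) := mul_nonneg (mul_nonneg hk₂ (sq_nonneg _)) (by linarith)
    have h2 : 0 ≤ k₂*b^2*(M-b) := mul_nonneg (mul_nonneg hk₂ (sq_nonneg _)) (by linarith)
    nlinarith [h1, h2]
  have t5 : 0 ≤ 2*k₃*(b^2*Z) := by positivity
  have t1 : 0 ≤ 2*k₁*a^2 := by positivity
  have t6 : 0 ≤ 2*k₂*M*a^2 := by positivity
  nlinarith [t1, t2, t3, t4, t5, t6]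


lemma negpart_mul (r : ℝ) : max (-r) 0 * r = -(max (-r) 0)^2 := by
  rcases le_total r 0 with h | h
  · rw [max_eq_left (by linarith)]; ring
  · rw [max_eq_right (by linarith)]; ring

set_option maxHeartbeats 2000000

/-- Every solution of the Robertson model with initial value (x₀, y₀, z₀) in the
non-negative orthant converges as t → ∞ to the equilibrium (0, 0, c), where
c = x₀ + y₀ + z₀. -/
theorem robertson_convergence_to_equilibrium
    (k₁ k₂ k₃ : ℝ) (hk₁ : 0 < k₁) (hk₂ : 0 < k₂) (hk₃ : 0 < k₃)
    (x y z : ℝ → ℝ)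
    (hx : ∀ t ≥ (0 : ℝ), HasDerivAt x (-k₁ * x t + k₃ * y t * z t) t)
    (hy : ∀ t ≥ (0 : ℝ), HasDerivAt y (k₁ * x t - k₂ * (y t) ^ 2 - k₃ * y t * z t) t)
    (hz : ∀ t ≥ (0 : ℝ), HasDerivAt z (k₂ * (y t) ^ 2) t)
    (h0 : 0 ≤ x 0 ∧ 0 ≤ y 0 ∧ 0 ≤ z 0) :
    Filter.Tendsto (fun t => (x t, y t, z t)) Filter.atTop
      (nhds ((0 : ℝ), (0 : ℝ), x 0 + y 0 + z 0)) := by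
  obtain ⟨hx00, hy00, hz00⟩ := h0
  set c := x 0 + y 0 + z 0 with hc
  clear_value c
  -- Step A : conservation
  have hsum : ∀ t ≥ (0:ℝ), x t + y t + z t = c := by
    have hs : ∀ u ≥ (0:ℝ), HasDerivAt (fun u => x u + y u + z u)
        ((-k₁ * x u + k₃ * y u * z u) + (k₁ * x u - k₂ * (y u) ^ 2 - k₃ * y u * z u)
          + k₂ * (y u) ^ 2) u :=
      fun u hu => ((hx u hu).add (hy u hu)).add (hz u hu)
    have mono := myMonotoneOn (convex_Ici 0) (subset_rfl) hs
      (fun u _ => le_of_eq (by ring))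
    have anti := myAntitoneOn (convex_Ici 0) (subset_rfl) hs
      (fun u _ => le_of_eq (by ring))
    intro t ht
    have h1 := mono (self_mem_Ici) (mem_Ici.2 ht) ht
    have h2 := anti (self_mem_Ici) (mem_Ici.2 ht) ht
    simp only at h1 h2
    rw [hc]
    linarith
  -- Step B : z nonneg
  have zmono : MonotoneOn z (Ici 0) :=
    myMonotoneOn (convex_Ici 0) subset_rfl hz (fun u _ => by positivity)
  have hznn : ∀ t ≥ (0:ℝ), 0 ≤ z t :=
    fun t ht => le_trans hz00 (zmono self_mem_Ici (mem_Ici.2 ht) ht)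
  -- Step C : x, y nonneg
  have hxynn : ∀ t ≥ (0:ℝ), 0 ≤ x t ∧ 0 ≤ y t := by
    intro T hT
    obtain ⟨My, hMy⟩ := (isCompact_Icc (a := (0:ℝ)) (b := T)).exists_bound_of_continuousOn
      (fun u hu => (hy u hu.1).continuousAt.continuousWithinAt)
    obtain ⟨Mz, hMz⟩ := (isCompact_Icc (a := (0:ℝ)) (b := T)).exists_bound_of_continuousOn
      (fun u hu => (hz u hu.1).continuousAt.continuousWithinAt)
    set M := max My Mz with hM
    set K := k₁ + k₃*M + 2*k₂*M with hK
    set f : ℝ → ℝ := fun u => max (-(x u)) 0 ^ 2 + max (-(y u)) 0 ^ 2 with hf_def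
    set f' : ℝ → ℝ := fun u =>
      -(2 * max (-(x u)) 0) * (-k₁ * x u + k₃ * y u * z u)
      + -(2 * max (-(y u)) 0) * (k₁ * x u - k₂ * (y u) ^ 2 - k₃ * y u * z u) with hf'_def
    have hf : ∀ u ≥ (0:ℝ), HasDerivAt f (f' u) u := by
      intro u hu
      have h1 := HasDerivAt.comp u (negpart_sq_hasDerivAt (x u)) (hx u hu)
      have h2 := HasDerivAt.comp u (negpart_sq_hasDerivAt (y u)) (hy u hu)
      simp only [Function.comp_def] at h1 h2
      exact h1.add h2
    have hE : ∀ u : ℝ, HasDerivAt (fun s : ℝ => Real.exp (-K * s)) (Real.exp (-K*u) * (-K*1)) u :=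
      fun u => ((hasDerivAt_id u).const_mul (-K)).exp
    set g : ℝ → ℝ := fun u => f u * Real.exp (-K * u) with hg_def
    have hg : ∀ u ≥ (0:ℝ), HasDerivAt g
        (f' u * Real.exp (-K*u) + f u * (Real.exp (-K*u) * (-K*1))) u :=
      fun u hu => (hf u hu).mul (hE u)
    have hbound : ∀ u ∈ Icc (0:ℝ) T, f' u ≤ K * f u := by
      intro u hu
      have hkey := key_bound (k₁ := k₁) (k₂ := k₂) (k₃ := k₃)
        (a := max (-(x u)) 0) (b := max (-(y u)) 0) (X := x u) (Y := y u) (Z := z u) (M := M)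
        hk₁.le hk₂.le hk₃.le (le_max_right _ _) (le_max_right _ _)
        (negpart_mul (x u)) (negpart_mul (y u)) (le_max_left _ _) (le_max_left _ _)
        (hznn u hu.1)
        (le_trans (le_abs_self _) (le_trans (hMz u hu) (le_max_right My Mz)))
        (le_trans (max_le (le_trans (neg_le_abs _) (hMy u hu)) (abs_nonneg (y u) |>.trans (hMy u hu)))
          (le_max_left My Mz))
      simpa [hf'_def, hf_def, hK] using hkey
    have ganti : AntitoneOn g (Icc 0 T) := by
      refine myAntitoneOn (a := 0) (convex_Icc 0 T) Icc_subset_Ici_self hg ?_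
      intro u hu
      rw [interior_Icc] at hu
      have hb := hbound u (Ioo_subset_Icc_self hu)
      have hep := Real.exp_pos (-K*u)
      nlinarith [mul_nonneg (sub_nonneg.2 hb) hep.le]
    have hg0 : g 0 = 0 := by
      have h1 : max (-(x 0)) 0 = 0 := max_eq_right (by linarith)
      have h2 : max (-(y 0)) 0 = 0 := max_eq_right (by linarith)
      simp [hg_def, hf_def, h1, h2]
    have hgT : g T ≤ 0 := by
      have := ganti (left_mem_Icc.2 hT) (right_mem_Icc.2 hT) hT
      rw [hg0] at this
      exact this
    have hfT : f T ≤ 0 := by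
      have hep := Real.exp_pos (-K*T)
      by_contra h
      push_neg at h
      have hgT' : f T * Real.exp (-K*T) ≤ 0 := hgT
      nlinarith [mul_pos h hep]
    have ha2 : max (-(x T)) 0 = 0 ∧ max (-(y T)) 0 = 0 := by
      have h1 := sq_nonneg (max (-(x T)) 0)
      have h2 := sq_nonneg (max (-(y T)) 0)
      have hfT' : max (-(x T)) 0 ^ 2 + max (-(y T)) 0 ^ 2 ≤ 0 := hfT
      constructor
      · have : max (-(x T)) 0 ^ 2 = 0 := le_antisymm (by linarith) h1
        exact pow_eq_zero_iff (n := 2) (by norm_num) |>.1 this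
      · have : max (-(y T)) 0 ^ 2 = 0 := le_antisymm (by linarith) h2
        exact pow_eq_zero_iff (n := 2) (by norm_num) |>.1 this
    constructor
    · have := ha2.1; by_contra h; push_neg at h
      rw [max_eq_left (by linarith)] at this; linarith
    · have := ha2.2; by_contra h; push_neg at h
      rw [max_eq_left (by linarith)] at this; linarith
  have hxnn : ∀ t ≥ (0:ℝ), 0 ≤ x t := fun t ht => (hxynn t ht).1
  have hynn : ∀ t ≥ (0:ℝ), 0 ≤ y t := fun t ht => (hxynn t ht).2
  have hcnn : (0:ℝ) ≤ c := by have := hsum 0 le_rfl; rw [hc] at *; linarith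
  have hxc : ∀ t ≥ (0:ℝ), x t ≤ c := by
    intro t ht; have := hsum t ht
    have h1 := hynn t ht; have h2 := hznn t ht; linarith
  have hyc : ∀ t ≥ (0:ℝ), y t ≤ c := by
    intro t ht; have := hsum t ht
    have h1 := hxnn t ht; have h2 := hznn t ht; linarith
  have hzc : ∀ t ≥ (0:ℝ), z t ≤ c := by
    intro t ht; have := hsum t ht
    have h1 := hxnn t ht; have h2 := hynn t ht; linarith
  -- Step E : v = x + y converges
  have hv : ∀ u ≥ (0:ℝ), HasDerivAt (fun u => x u + y u)
      ((-k₁ * x u + k₃ * y u * z u) + (k₁ * x u - k₂ * (y u) ^ 2 - k₃ * y u * z u)) u :=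
    fun u hu => (hx u hu).add (hy u hu)
  have vanti : AntitoneOn (fun u => x u + y u) (Ici 0) := by
    refine myAntitoneOn (convex_Ici 0) subset_rfl hv ?_
    intro u _
    nlinarith [sq_nonneg (y u), hk₂.le]
  set V : ℝ → ℝ := fun t => x (max t 0) + y (max t 0) with hV_def
  clear_value V
  have Vanti : Antitone V := by
    intro s t hst
    simp only [hV_def]
    exact vanti (mem_Ici.2 (le_max_right s 0)) (mem_Ici.2 (le_max_right t 0))
      (max_le_max hst le_rfl)
  have Vbdd : BddBelow (Set.range V) := by
    refine ⟨0, fun w hw => ?_⟩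
    obtain ⟨t, rfl⟩ := hw
    have h1 := hxnn (max t 0) (le_max_right t 0)
    have h2 := hynn (max t 0) (le_max_right t 0)
    simp only [hV_def]; linarith
  set m := ⨅ t, V t with hm_def
  clear_value m
  have hVm : Tendsto V atTop (nhds m) := by
    rw [hm_def]; exact tendsto_atTop_ciInf Vanti Vbdd
  have hvm : Tendsto (fun t => x t + y t) atTop (nhds m) := by
    refine hVm.congr' ?_
    filter_upwards [eventually_ge_atTop (0:ℝ)] with t ht
    simp only [hV_def, max_eq_left ht]
  have hmle : ∀ t ≥ (0:ℝ), m ≤ x t + y t := by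
    intro t ht
    have := ciInf_le Vbdd t
    rw [hm_def]
    refine le_trans this (le_of_eq ?_)
    simp only [hV_def, max_eq_left ht]
  have hm0 : 0 ≤ m := by
    rw [hm_def]
    refine le_ciInf fun t => ?_
    have h1 := hxnn (max t 0) (le_max_right t 0)
    have h2 := hynn (max t 0) (le_max_right t 0)
    simp only [hV_def]; linarith
  -- Step F : y tends to 0
  obtain ⟨B, hB_def⟩ : ∃ B : ℝ, B = k₁*c + k₂*c^2 + k₃*c^2 + 1 := ⟨_, rfl⟩
  have hB : 0 < B := by
    rw [hB_def]
    nlinarith [mul_nonneg hk₁.le hcnn, mul_nonneg hk₂.le (sq_nonneg c), mul_nonneg hk₃.le (sq_nonneg c)]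
  have hyLip : ∀ s ∈ Ici (0:ℝ), ∀ t ∈ Ici (0:ℝ), |y t - y s| ≤ B * |t - s| := by
    intro s hs t ht
    have key : ∀ u ∈ Ici (0:ℝ), ‖k₁ * x u - k₂ * (y u) ^ 2 - k₃ * y u * z u‖ ≤ B := by
      intro u hu
      have h1 := hxnn u hu; have h2 := hynn u hu; have h3 := hznn u hu
      have h4 := hxc u hu; have h5 := hyc u hu; have h6 := hzc u hu
      have hy2 : (y u)^2 ≤ c^2 := by nlinarith
      have hyz : y u * z u ≤ c^2 := by nlinarith
      have hyznn : 0 ≤ y u * z u := mul_nonneg h2 h3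
      rw [Real.norm_eq_abs, abs_le, hB_def]
      constructor
      · have e1 : k₂ * (y u)^2 ≤ k₂ * c^2 := by nlinarith
        have e2 : k₃ * (y u * z u) ≤ k₃ * c^2 := by nlinarith
        have e3 : 0 ≤ k₁ * x u := mul_nonneg hk₁.le h1
        nlinarith
      · have e1 : 0 ≤ k₂ * (y u)^2 := by positivity
        have e2 : 0 ≤ k₃ * (y u * z u) := mul_nonneg hk₃.le hyznn
        have e3 : k₁ * x u ≤ k₁ * c := mul_le_mul_of_nonneg_left h4 hk₁.le
        nlinarith
    have := Convex.norm_image_sub_le_of_norm_hasDerivWithin_le (C := B)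
      (f := y) (f' := fun u => k₁ * x u - k₂ * (y u) ^ 2 - k₃ * y u * z u) (s := Ici 0)
      (fun u hu => (hy u hu).hasDerivWithinAt) key (convex_Ici 0) hs ht
    simpa [Real.norm_eq_abs] using this
  have hytends : Tendsto y atTop (nhds 0) := by
    rw [Metric.tendsto_atTop]
    intro ε hε
    obtain ⟨δ, hδ_def⟩ : ∃ d : ℝ, d = ε / (2*B) := ⟨_, rfl⟩
    have hδ : 0 < δ := by rw [hδ_def]; positivity
    obtain ⟨η, hη_def⟩ : ∃ e : ℝ, e = k₂ * (ε/2)^2 * δ := ⟨_, rfl⟩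
    have hη : 0 < η := by rw [hη_def]; positivity
    obtain ⟨N, hN⟩ := (Metric.tendsto_atTop.1 hvm) η hη
    refine ⟨max N 0, fun t ht => ?_⟩
    have ht0 : (0:ℝ) ≤ t := le_trans (le_max_right N 0) ht
    have htN : N ≤ t := le_trans (le_max_left N 0) ht
    rw [Real.dist_eq, sub_zero, abs_of_nonneg (hynn t ht0)]
    by_contra hcon
    push_neg at hcon
    have hlow : ∀ s ∈ Icc t (t+δ), ε/2 ≤ y s := by
      intro s hs
      have hs0 : (0:ℝ) ≤ s := le_trans ht0 hs.1
      have := hyLip t ht0 s hs0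
      have habs : |s - t| ≤ δ := by
        rw [abs_of_nonneg (by linarith [hs.1])]
        linarith [hs.2]
      have hBδ : B * |s - t| ≤ B * δ := by nlinarith
      have hBδ2 : B * δ = ε/2 := by
        rw [hδ_def]; field_simp
      have := abs_le.1 (le_trans this hBδ)
      linarith [this.1, hBδ2 ▸ this.1]
    have hw : ∀ u ≥ (0:ℝ), HasDerivAt (fun s => (x s + y s) + (k₂*(ε/2)^2) * s)
        (((-k₁ * x u + k₃ * y u * z u) + (k₁ * x u - k₂ * (y u) ^ 2 - k₃ * y u * z u))
          + (k₂*(ε/2)^2) * 1) u :=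
      fun u hu => (hv u hu).add ((hasDerivAt_id u).const_mul _)
    have wanti : AntitoneOn (fun s => (x s + y s) + (k₂*(ε/2)^2) * s) (Icc t (t+δ)) := by
      refine myAntitoneOn (a := 0) (convex_Icc _ _) ?_ hw ?_
      · intro u hu; exact le_trans ht0 hu.1
      · intro u hu
        rw [interior_Icc] at hu
        have h1 := hlow u (Ioo_subset_Icc_self hu)
        have h2 : (ε/2)^2 ≤ (y u)^2 := by nlinarith
        have h3 := mul_le_mul_of_nonneg_left h2 hk₂.le
        linarith
    have hwle := wanti (left_mem_Icc.2 (by linarith)) (right_mem_Icc.2 (by linarith))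
      (by linarith : t ≤ t + δ)
    simp only at hwle
    have hdrop : x t + y t - (x (t+δ) + y (t+δ)) ≥ η := by
      rw [hη_def]; nlinarith [hwle]
    have h1 := hN t htN
    have h2 := hmle (t+δ) (by linarith)
    rw [Real.dist_eq] at h1
    have := abs_lt.1 h1
    linarith [this.2]
  -- Step G : x tends to m
  have hxm : Tendsto x atTop (nhds m) := by
    have h := hvm.sub hytends
    simpa using h
  -- Step H : m = 0
  have hmzero : m = 0 := by
    by_contra hne
    have hmpos : 0 < m := lt_of_le_of_ne hm0 (Ne.symm hne)
    obtain ⟨β, hβ_def⟩ : ∃ b : ℝ, b = k₁*m/(4*(k₃*c+1)) := ⟨_, rfl⟩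
    have hk3c : 0 < k₃*c+1 := by nlinarith [mul_nonneg hk₃.le hcnn]
    have hβ : 0 < β := by rw [hβ_def]; positivity
    have hβ4 : β * (4*(k₃*c+1)) = k₁ * m := by
      rw [hβ_def]; field_simp
    obtain ⟨N₁, hN₁⟩ := Metric.tendsto_atTop.1 hxm (m/2) (by positivity)
    obtain ⟨N₂, hN₂⟩ := Metric.tendsto_atTop.1 hytends β hβ
    obtain ⟨T, hT_def⟩ : ∃ T : ℝ, T = max (max N₁ N₂) 0 := ⟨_, rfl⟩
    have hT0 : (0:ℝ) ≤ T := by rw [hT_def]; exact le_max_right _ _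
    have key : ∀ u ≥ T, -k₁ * x u + k₃ * y u * z u ≤ -(k₁*m/4) := by
      intro u hu
      have hu0 : (0:ℝ) ≤ u := le_trans hT0 hu
      have hu1 : N₁ ≤ u := le_trans (le_trans (le_max_left _ _) (le_max_left _ _)) (hT_def ▸ hu)
      have hu2 : N₂ ≤ u := le_trans (le_trans (le_max_right _ _) (le_max_left _ _)) (hT_def ▸ hu)
      have hx1 := hN₁ u hu1
      have hy1 := hN₂ u hu2
      rw [Real.dist_eq] at hx1 hy1
      have hx2 : m/2 < x u := by
        have := abs_lt.1 hx1; linarith [this.1]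
      have hy2 : y u < β := by
        rw [sub_zero] at hy1
        have := abs_lt.1 hy1; linarith [this.2]
      have hyz : y u * z u ≤ β * c :=
        mul_le_mul hy2.le (hzc u hu0) (hznn u hu0) hβ.le
      have h3 : k₃ * (y u * z u) ≤ k₃ * (β * c) := mul_le_mul_of_nonneg_left hyz hk₃.le
      have h4 : k₃ * (β * c) ≤ k₁ * m / 4 - β + β := by nlinarith
      have h5 : k₁ * (m/2) ≤ k₁ * x u := mul_le_mul_of_nonneg_left hx2.le hk₁.le
      nlinarith
    have hw : ∀ u ≥ (0:ℝ), HasDerivAt (fun s => x s + (k₁*m/4) * s)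
        ((-k₁ * x u + k₃ * y u * z u) + (k₁*m/4) * 1) u :=
      fun u hu => (hx u hu).add ((hasDerivAt_id u).const_mul _)
    have anti : AntitoneOn (fun s => x s + (k₁*m/4) * s) (Ici T) := by
      refine myAntitoneOn (a := 0) (convex_Ici T) (fun u hu => le_trans hT0 hu) hw ?_
      intro u hu
      rw [interior_Ici] at hu
      have := key u (le_of_lt hu)
      linarith
    obtain ⟨t, ht_def⟩ : ∃ t : ℝ, t = T + (x T)/(k₁*m/4) + 1 := ⟨_, rfl⟩
    have hα : 0 < k₁*m/4 := by positivity
    have hxT : 0 ≤ x T := hxnn T hT0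
    have htT : T ≤ t := by
      rw [ht_def]
      have : 0 ≤ x T / (k₁*m/4) := by positivity
      linarith
    have hle := anti (self_mem_Ici) (mem_Ici.2 htT) htT
    simp only at hle
    have hxt : 0 ≤ x t := hxnn t (le_trans hT0 htT)
    have hdiv : (k₁*m/4) * ((x T)/(k₁*m/4)) = x T := by
      field_simp
    have ht' : (k₁*m/4) * t = (k₁*m/4) * T + x T + (k₁*m/4) := by
      rw [ht_def]; rw [mul_add, mul_add, hdiv]; ring
    linarith
  -- Step I : conclude
  rw [hmzero] at hxm
  have hztends : Tendsto z atTop (nhds c) := by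
    have h := (tendsto_const_nhds (x := c) (f := atTop)).sub (hxm.add hytends)
    rw [add_zero, sub_zero] at h
    refine h.congr' ?_
    filter_upwards [eventually_ge_atTop (0:ℝ)] with t ht
    have := hsum t ht
    linarith
  exact hxm.prodMk_nhds (hytends.prodMk_nhds hztends)
end

section
/- Every periodic solution of the planar reduced Robertson system that is contained in the non-negative quadrant {(y,z) : y ≥ 0, z ≥ 0} is constant; i.e., the system has no nonconstant periodic solutions there. -/
/-- Every periodic solution of the planar reduced Robertson system
ẏ = k₁(c − y − z) − k₂y² − k₃yz, ż = k₂y² that is contained in the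
non-negative quadrant is constant. -/
theorem robertson_planar_no_nonconstant_periodic
    (k₁ k₂ k₃ c : ℝ) (hk₁ : 0 < k₁) (hk₂ : 0 < k₂) (hk₃ : 0 < k₃) (hc : 0 < c)
    (y z : ℝ → ℝ) (T : ℝ) (hT : 0 < T)
    (hy : ∀ t : ℝ, HasDerivAt y (k₁ * (c - y t - z t) - k₂ * (y t) ^ 2 - k₃ * y t * z t) t)
    (hz : ∀ t : ℝ, HasDerivAt z (k₂ * (y t) ^ 2) t)
    (hyper : Function.Periodic y T) (hzper : Function.Periodic z T)
    (hquad : ∀ t : ℝ, 0 ≤ y t ∧ 0 ≤ z t) :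
    ∀ t : ℝ, y t = y 0 ∧ z t = z 0 := by
  -- z is monotone since ż = k₂ y² ≥ 0
  have hmono : Monotone z := by
    have hdiff : Differentiable ℝ z := fun t => (hz t).differentiableAt
    apply monotone_of_deriv_nonneg hdiff
    intro t
    rw [(hz t).deriv]
    positivity
  -- a monotone periodic function is constant
  have hconst : ∀ t : ℝ, z t = z 0 := by
    intro t
    obtain ⟨n, hn⟩ := exists_nat_ge (|t| / T)
    have hnT : |t| ≤ n * T := (div_le_iff₀ hT).mp hn
    have h1 : z t ≤ z 0 := by
      have := hmono (le_trans (le_abs_self t) hnT)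
      calc z t ≤ z (n * T) := this
        _ = z 0 := by
          have := (hzper.nat_mul n) 0
          simpa using this
    have h2 : z 0 ≤ z t := by
      have hneg : -(n * T) ≤ t := by
        have := neg_abs_le t
        linarith
      have := hmono hneg
      calc z 0 = z (-(n * T)) := by
            have := (hzper.int_mul (-n : ℤ)) 0
            simpa using this.symm
        _ ≤ z t := this
    linarith
  -- z constant forces ż = 0, hence y ≡ 0
  have hzfun : z = fun _ => z 0 := funext hconst
  have hy0 : ∀ t : ℝ, y t = 0 := by
    intro t
    have h0 : HasDerivAt z 0 t := by
      rw [hzfun]; exact hasDerivAt_const t (z 0)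
    have := (hz t).unique h0
    have hy2 : (y t) ^ 2 = 0 := by
      have := mul_eq_zero.mp this
      rcases this with h | h
      · exact absurd h (ne_of_gt hk₂)
      · exact h
    exact pow_eq_zero_iff (by norm_num) |>.mp hy2
  intro t
  exact ⟨by rw [hy0 t, hy0 0], hconst t⟩
end

section
/- For ε₁, ε₂ ≥ 0 and c > 0, the compact set K = {(y,z) : y ≥ 0, z ≥ 0, y + z ≤ c} is forward invariant under the rescaled planar Robertson system: every solution starting in K remains in K for all t ≥ 0. -/
open Set Filter Asymptotics

private lemma hasDerivAt_minSq (x : ℝ) :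
    HasDerivAt (fun u : ℝ => (min u 0) ^ 2) (2 * min x 0) x := by
  rcases lt_trichotomy x 0 with hx | hx | hx
  · have h : (fun u : ℝ => u ^ 2) =ᶠ[nhds x] fun u => (min u 0) ^ 2 := by
      filter_upwards [eventually_lt_nhds hx] with u hu
      rw [min_eq_left hu.le]
    have h1 := hasDerivAt_pow 2 x
    norm_num at h1
    have h2 : HasDerivAt (fun u : ℝ => (min u 0) ^ 2) (2 * x) x :=
      h1.congr_of_eventuallyEq h.symm
    rwa [min_eq_left hx.le]
  · subst hx
    rw [min_self, mul_zero]
    rw [hasDerivAt_iff_isLittleO]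
    simp only [min_self, ne_eq, OfNat.ofNat_ne_zero, not_false_eq_true, zero_pow, sub_zero,
      smul_zero]
    rw [Asymptotics.isLittleO_iff]
    intro c hc
    filter_upwards [eventually_abs_sub_lt 0 hc] with u hu
    simp only [sub_zero, Real.norm_eq_abs] at hu ⊢
    have h1 : (min u 0) ^ 2 ≤ u ^ 2 := by
      rcases le_total u 0 with h | h
      · rw [min_eq_left h]
      · rw [min_eq_right h]
        simpa using sq_nonneg u
    calc |(min u 0) ^ 2| = (min u 0) ^ 2 := abs_of_nonneg (sq_nonneg _)
      _ ≤ u ^ 2 := h1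
      _ = |u| * |u| := by rw [← sq_abs]; ring
      _ ≤ c * |u| := mul_le_mul_of_nonneg_right hu.le (abs_nonneg u)
  · have h : (fun _ : ℝ => (0 : ℝ)) =ᶠ[nhds x] fun u => (min u 0) ^ 2 := by
      filter_upwards [eventually_gt_nhds hx] with u hu
      rw [min_eq_right hu.le]; norm_num
    have h2 : HasDerivAt (fun u : ℝ => (min u 0) ^ 2) 0 x :=
      (hasDerivAt_const x 0).congr_of_eventuallyEq h.symm
    rwa [min_eq_right hx.le, mul_zero]

private lemma hasDerivAt_maxSq (x : ℝ) :
    HasDerivAt (fun u : ℝ => (max u 0) ^ 2) (2 * max x 0) x := by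
  have h := (hasDerivAt_minSq (-x)).comp x (hasDerivAt_neg x)
  have heq : (fun u : ℝ => (min (-u) 0) ^ 2) = fun u : ℝ => (max u 0) ^ 2 := by
    funext u
    rw [show min (-u) 0 = -max u 0 by simp [min_def, max_def]; split_ifs <;> linarith, neg_sq]
  rw [show ((fun u : ℝ => (min u 0) ^ 2) ∘ fun u => -u) = fun u : ℝ => (min (-u) 0) ^ 2 from rfl,
    heq] at h
  refine h.congr_deriv ?_
  rw [show min (-x) 0 = -max x 0 by simp [min_def, max_def]; split_ifs <;> linarith]
  ring
open Set Filter

private lemma freq_aux {f : ℝ → ℝ} {f' x r : ℝ} (h : HasDerivAt f f' x) (hr : f' < r) :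
    ∃ᶠ w in nhdsWithin x (Ioi x), (w - x)⁻¹ * (f w - f x) < r := by
  have h2 := h.hasDerivWithinAt.liminf_right_slope_le hr
  apply h2.mono
  intro w hw
  rwa [slope_def_field, div_eq_inv_mul] at hw

private lemma bound_aux (ε₁ ε₂ c M a b : ℝ) (hε₁ : 0 ≤ ε₁) (hε₂ : 0 ≤ ε₂) (hM0 : 0 ≤ M)
    (ha1 : -M ≤ a) (ha2 : a ≤ M) (hb1 : -M ≤ b) (hb2 : b ≤ M) :
    2 * min a 0 * (ε₁ * (c - a - b) - a ^ 2 - ε₂ * a * b)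
      + 2 * min b 0 * a ^ 2
      + 2 * max (a + b - c) 0 * ((ε₁ * (c - a - b) - a ^ 2 - ε₂ * a * b) + a ^ 2)
    ≤ (ε₁ + 2 * M + 3 * ε₂ * M)
      * ((min a 0) ^ 2 + (min b 0) ^ 2 + (max (a + b - c) 0) ^ 2) + 0 := by
  set p : ℝ := min a 0 with hpdef
  set q : ℝ := min b 0 with hqdef
  set r : ℝ := max (a + b - c) 0 with hrdef
  have hp : p ≤ 0 := min_le_right _ _
  have hq : q ≤ 0 := min_le_right _ _
  have hr0 : 0 ≤ r := le_max_right _ _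
  have hrge : a + b - c ≤ r := le_max_left _ _
  have hpa : p * a = p * p := by
    rcases le_total a 0 with h | h
    · rw [hpdef, min_eq_left h]
    · rw [hpdef, min_eq_right h]; ring
  have hrr : r * (a + b - c) = r * r := by
    rcases le_total (a + b - c) 0 with h | h
    · rw [hrdef, max_eq_right h]; ring
    · rw [hrdef, max_eq_left h]
  have hab : -(a * b) ≤ M * (-p - q) := by
    rcases le_total a 0 with h | h <;> rcases le_total b 0 with h' | h'
    · rw [hpdef, min_eq_left h, hqdef, min_eq_left h']; nlinarith
    · rw [hpdef, min_eq_left h, hqdef, min_eq_right h']; nlinarith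
    · rw [hpdef, min_eq_right h, hqdef, min_eq_left h']; nlinarith
    · rw [hpdef, min_eq_right h, hqdef, min_eq_right h']; nlinarith
  have hA : p * (c - a - b) ≤ -(p * r) := by
    have h1 : p * ((c - a - b) + r) ≤ 0 :=
      mul_nonpos_of_nonpos_of_nonneg hp (by linarith)
    nlinarith [h1]
  have t1 : 2 * p * (ε₁ * (c - a - b) - a ^ 2 - ε₂ * a * b)
      ≤ (ε₁ + 2 * M + 2 * ε₂ * M) * p ^ 2 + ε₁ * r ^ 2 := by
    have hA2 : 2 * ε₁ * (p * (c - a - b)) ≤ 2 * ε₁ * (-(p * r)) :=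
      mul_le_mul_of_nonneg_left hA (by linarith)
    have hB : ε₁ * (-(2 * (p * r))) ≤ ε₁ * (p ^ 2 + r ^ 2) :=
      mul_le_mul_of_nonneg_left (by nlinarith [sq_nonneg (p + r)]) hε₁
    have hD : 0 ≤ (M + a) * p ^ 2 := mul_nonneg (by linarith) (sq_nonneg p)
    have hE : 0 ≤ ε₂ * ((M + b) * p ^ 2) :=
      mul_nonneg hε₂ (mul_nonneg (by linarith) (sq_nonneg p))
    have hpa2 : p * a ^ 2 = p ^ 2 * a := by
      rw [pow_two, pow_two, ← mul_assoc, hpa]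
    have hpab : p * (a * b) = p ^ 2 * b := by
      rw [← mul_assoc, hpa, pow_two]
    have hpab2 : 2 * ε₂ * (p * (a * b)) = 2 * ε₂ * (p ^ 2 * b) := by rw [hpab]
    linarith [hA2, hB, hD, hE, hpa2.le, hpa2.ge, hpab2.le, hpab2.ge]
  have t2 : 2 * q * a ^ 2 ≤ 0 :=
    mul_nonpos_of_nonpos_of_nonneg (by linarith) (sq_nonneg a)
  have t3 : 2 * r * (ε₁ * (c - a - b) - ε₂ * a * b)
      ≤ ε₂ * M * (2 * r ^ 2 + p ^ 2 + q ^ 2) := by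
    have e1 : r * (c - a - b) = -(r ^ 2) := by
      rw [pow_two, ← hrr]; ring
    have f1 : 2 * ε₁ * (r * (c - a - b)) ≤ 0 := by
      rw [e1]
      have : 0 ≤ 2 * ε₁ * r ^ 2 := mul_nonneg (by linarith) (sq_nonneg r)
      linarith
    have f2 : r * (-(a * b)) ≤ r * (M * (-p - q)) :=
      mul_le_mul_of_nonneg_left hab hr0
    have g2 : 2 * ε₂ * (r * (-(a * b))) ≤ 2 * ε₂ * (r * (M * (-p - q))) :=
      mul_le_mul_of_nonneg_left f2 (by linarith)
    have f3 : -(2 * (r * p)) ≤ r ^ 2 + p ^ 2 := by nlinarith [sq_nonneg (r + p)]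
    have f4 : -(2 * (r * q)) ≤ r ^ 2 + q ^ 2 := by nlinarith [sq_nonneg (r + q)]
    have g3 : ε₂ * M * (-(2 * (r * p))) ≤ ε₂ * M * (r ^ 2 + p ^ 2) :=
      mul_le_mul_of_nonneg_left f3 (mul_nonneg hε₂ hM0)
    have g4 : ε₂ * M * (-(2 * (r * q))) ≤ ε₂ * M * (r ^ 2 + q ^ 2) :=
      mul_le_mul_of_nonneg_left f4 (mul_nonneg hε₂ hM0)
    linarith [f1, g2, g3, g4]
  have hEM : 0 ≤ ε₂ * M := mul_nonneg hε₂ hM0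
  have hq2 : 0 ≤ (ε₁ + 2 * M + 2 * ε₂ * M) * q ^ 2 :=
    mul_nonneg (by linarith) (sq_nonneg q)
  have hr2 : 0 ≤ (2 * M + ε₂ * M) * r ^ 2 :=
    mul_nonneg (by linarith) (sq_nonneg r)
  linarith [t1, t2, t3, hq2, hr2]
set_option maxHeartbeats 1000000 in
/-- For ε₁, ε₂ ≥ 0 and c > 0, the compact set
K = {(y,z) : y ≥ 0, z ≥ 0, y + z ≤ c} is forward invariant under the rescaled
planar Robertson system y' = ε₁(c − y − z) − y² − ε₂yz, z' = y². -/
theorem rescaled_robertson_K_forward_invariant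
    (ε₁ ε₂ c : ℝ) (hε₁ : 0 ≤ ε₁) (hε₂ : 0 ≤ ε₂) (hc : 0 < c)
    (y z : ℝ → ℝ)
    (hy : ∀ t ≥ (0 : ℝ),
      HasDerivAt y (ε₁ * (c - y t - z t) - (y t) ^ 2 - ε₂ * y t * z t) t)
    (hz : ∀ t ≥ (0 : ℝ), HasDerivAt z ((y t) ^ 2) t)
    (h0 : 0 ≤ y 0 ∧ 0 ≤ z 0 ∧ y 0 + z 0 ≤ c) :
    ∀ t ≥ (0 : ℝ), 0 ≤ y t ∧ 0 ≤ z t ∧ y t + z t ≤ c := by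
  intro T hT
  have hyc : ContinuousOn y (Icc 0 T) := fun s hs =>
    (hy s hs.1).continuousAt.continuousWithinAt
  have hzc : ContinuousOn z (Icc 0 T) := fun s hs =>
    (hz s hs.1).continuousAt.continuousWithinAt
  obtain ⟨My, hMy⟩ := isCompact_Icc.exists_bound_of_continuousOn hyc
  obtain ⟨Mz, hMz⟩ := isCompact_Icc.exists_bound_of_continuousOn hzc
  have hMy' : ∀ s ∈ Icc (0:ℝ) T, |y s| ≤ max My Mz := fun s hs =>
    (hMy s hs).trans (le_max_left _ _)
  have hMz' : ∀ s ∈ Icc (0:ℝ) T, |z s| ≤ max My Mz := fun s hs =>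
    (hMz s hs).trans (le_max_right _ _)
  have hM0 : 0 ≤ max My Mz := (abs_nonneg _).trans (hMy' 0 ⟨le_refl _, hT⟩)
  have hgderiv : ∀ s ∈ Ico (0:ℝ) T,
      HasDerivAt (fun s =>
        (min (y s) 0) ^ 2 + (min (z s) 0) ^ 2 + (max (y s + z s - c) 0) ^ 2)
        (2 * min (y s) 0 * (ε₁ * (c - y s - z s) - (y s) ^ 2 - ε₂ * y s * z s)
          + 2 * min (z s) 0 * (y s) ^ 2
          + 2 * max (y s + z s - c) 0
            * ((ε₁ * (c - y s - z s) - (y s) ^ 2 - ε₂ * y s * z s) + (y s) ^ 2)) s := by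
    intro s hs
    exact (((hasDerivAt_minSq (y s)).comp s (hy s hs.1)).add
      ((hasDerivAt_minSq (z s)).comp s (hz s hs.1))).add
      ((hasDerivAt_maxSq (y s + z s - c)).comp s (h := fun s => y s + z s - c)
        (((hy s hs.1).add (hz s hs.1)).sub_const c))
  have hgcont : ContinuousOn (fun s =>
      (min (y s) 0) ^ 2 + (min (z s) 0) ^ 2 + (max (y s + z s - c) 0) ^ 2)
      (Icc 0 T) := by
    apply ContinuousOn.add
    apply ContinuousOn.add
    · exact (hyc.inf continuousOn_const).pow 2
    · exact (hzc.inf continuousOn_const).pow 2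
    · exact (((hyc.add hzc).sub continuousOn_const).sup continuousOn_const).pow 2
  have hg0 : (min (y 0) 0) ^ 2 + (min (z 0) 0) ^ 2 + (max (y 0 + z 0 - c) 0) ^ 2
      ≤ 0 := by
    rw [min_eq_right h0.1, min_eq_right h0.2.1,
      max_eq_right (by linarith [h0.2.2] : y 0 + z 0 - c ≤ 0)]
    norm_num
  have key := le_gronwallBound_of_liminf_deriv_right_le
    (f := fun s => (min (y s) 0) ^ 2 + (min (z s) 0) ^ 2 + (max (y s + z s - c) 0) ^ 2)
    (f' := fun s =>
        2 * min (y s) 0 * (ε₁ * (c - y s - z s) - (y s) ^ 2 - ε₂ * y s * z s)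
          + 2 * min (z s) 0 * (y s) ^ 2
          + 2 * max (y s + z s - c) 0
            * ((ε₁ * (c - y s - z s) - (y s) ^ 2 - ε₂ * y s * z s) + (y s) ^ 2))
    (δ := 0) (K := ε₁ + 2 * max My Mz + 3 * ε₂ * max My Mz) (ε := 0) (a := 0) (b := T)
    hgcont
    (fun x hx r hr => freq_aux (hgderiv x hx) hr)
    hg0
    (fun x hx => by
      have h1 := abs_le.1 (hMy' x ⟨hx.1, hx.2.le⟩)
      have h2 := abs_le.1 (hMz' x ⟨hx.1, hx.2.le⟩)
      exact bound_aux ε₁ ε₂ c (max My Mz) (y x) (z x) hε₁ hε₂ hM0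
        h1.1 h1.2 h2.1 h2.2)
  have hgT : (min (y T) 0) ^ 2 + (min (z T) 0) ^ 2 + (max (y T + z T - c) 0) ^ 2
      ≤ 0 := by
    have h := key T ⟨hT, le_refl T⟩
    rwa [gronwallBound_ε0_δ0] at h
  have e1 := sq_nonneg (min (y T) 0)
  have e2 := sq_nonneg (min (z T) 0)
  have e3 := sq_nonneg (max (y T + z T - c) 0)
  have h1 : (min (y T) 0) ^ 2 = 0 := by linarith
  have h2 : (min (z T) 0) ^ 2 = 0 := by linarith
  have h3 : (max (y T + z T - c) 0) ^ 2 = 0 := by linarith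
  refine ⟨?_, ?_, ?_⟩
  · have := pow_eq_zero_iff (n := 2) (by norm_num) |>.1 h1
    rcases le_total (y T) 0 with h | h
    · rw [min_eq_left h] at this; linarith
    · exact h
  · have := pow_eq_zero_iff (n := 2) (by norm_num) |>.1 h2
    rcases le_total (z T) 0 with h | h
    · rw [min_eq_left h] at this; linarith
    · exact h
  · have := pow_eq_zero_iff (n := 2) (by norm_num) |>.1 h3
    rcases le_total (y T + z T - c) 0 with h | h
    · linarith
    · rw [max_eq_left h] at this; linarith
end

section
/- Let ε₂ ≥ 0 and c > 0. The reduced flow ż = y² on the attracting critical branch z = (c − y²)/(1 + ε₂y) pulls back to the scalar ODE ẏ = −y²(1 + ε₂y)²/(2y + ε₂y² + ε₂c). The solution of this scalar ODE with initial value y(0) = √c exists for all t ≥ 0, satisfies 0 < y(t) ≤ √c for all t ≥ 0, and converges to 0 as t → ∞; consequently the corresponding point (y(t), (c − y(t)²)/(1 + ε₂y(t))) on the critical branch converges to the equilibrium (0, c). -/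
open Real Filter Set

open Classical in
/-- Choice-based partial inverse: picks a positive preimage of `v` under `G` if one exists. -/
noncomputable def invFn (G : ℝ → ℝ) (v : ℝ) : ℝ :=
  if h : ∃ u, 0 < u ∧ G u = v then h.choose else 1

lemma invFn_spec {G : ℝ → ℝ} {v : ℝ} (h : ∃ u, 0 < u ∧ G u = v) :
    0 < invFn G v ∧ G (invFn G v) = v := by
  classical
  rw [invFn, dif_pos h]
  exact h.choose_spec

/-- Antiderivative of `(2u + pu² + pc)/(u²(1+pu)²)` for `u > 0`. -/
noncomputable def Gf (p c : ℝ) : ℝ → ℝ := fun u =>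
  (2 - 2*p^2*c) * (Real.log u - Real.log (1 + p*u)) - p*c/u + (1 - p^2*c)/(1 + p*u)

lemma Gf_deriv {p c : ℝ} (hp : 0 < p) {u : ℝ} (hu : 0 < u) :
    HasDerivAt (Gf p c) ((2*u + p*u^2 + p*c)/(u^2*(1 + p*u)^2)) u := by
  have h1 : 0 < 1 + p*u := by nlinarith
  have hlin : HasDerivAt (fun u : ℝ => 1 + p*u) p u := by
    simpa using ((hasDerivAt_id u).const_mul p).const_add 1
  have hlog1 : HasDerivAt (fun u : ℝ => Real.log u) u⁻¹ u := Real.hasDerivAt_log hu.ne'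
  have hlog2 : HasDerivAt (fun u : ℝ => Real.log (1 + p*u)) ((1 + p*u)⁻¹ * p) u :=
    by have := (Real.hasDerivAt_log h1.ne').comp u hlin; exact this
  have hinv1 : HasDerivAt (fun u : ℝ => p*c/u) (p*c * (-(u^2)⁻¹)) u := by
    simpa [div_eq_mul_inv] using (hasDerivAt_inv hu.ne').const_mul (p*c)
  have hinv2 : HasDerivAt (fun u : ℝ => (1 - p^2*c)/(1 + p*u))
      ((1 - p^2*c) * (-((1 + p*u)^2)⁻¹ * p)) u := by
    simpa [div_eq_mul_inv] using ((hasDerivAt_inv h1.ne').comp u hlin).const_mul (1 - p^2*c)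
  have := (((hlog1.sub hlog2).const_mul (2 - 2*p^2*c)).sub hinv1).add hinv2
  refine this.congr_deriv ?_
  field_simp
  ring

lemma Gf_mono {p c : ℝ} (hp : 0 < p) (hc : 0 < c) : StrictMonoOn (Gf p c) (Set.Ioi 0) := by
  apply strictMonoOn_of_deriv_pos (convex_Ioi 0)
  · exact fun u hu => (Gf_deriv hp hu).continuousAt.continuousWithinAt
  · intro u hu
    rw [interior_Ioi] at hu
    rw [(Gf_deriv hp hu).deriv]
    have hu' : (0:ℝ) < u := hu
    have h1 : 0 < 1 + p*u := by nlinarith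
    have h2 : 0 < 2*u + p*u^2 + p*c := by positivity
    positivity

lemma Gf_bot {p c : ℝ} (hp : 0 < p) (hc : 0 < c) :
    Tendsto (Gf p c) (nhdsWithin 0 (Set.Ioi 0)) atBot := by
  set A := 2 - 2*p^2*c with hA
  have h1 : Tendsto (fun u : ℝ => (A * (u * Real.log u) - p*c) * u⁻¹)
      (nhdsWithin 0 (Set.Ioi 0)) atBot := by
    have hneg : -(p*c) < 0 := by nlinarith
    apply Filter.Tendsto.neg_mul_atTop hneg _ tendsto_inv_nhdsGT_zero
    have hm : Tendsto (fun u : ℝ => u * Real.log u) (nhdsWithin 0 (Set.Ioi 0)) (nhds 0) := by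
      have := (Real.continuous_mul_log.tendsto 0).mono_left
        (nhdsWithin_le_nhds (s := Set.Ioi (0:ℝ)))
      simpa using this
    have := (hm.const_mul A).sub_const (p*c)
    simpa using this
  have h2 : Tendsto (fun u : ℝ => -(A * Real.log (1 + p*u)) + (1 - p^2*c)/(1 + p*u))
      (nhdsWithin 0 (Set.Ioi 0)) (nhds (-(A * Real.log 1) + (1 - p^2*c)/(1 + p*0))) := by
    have c1 : ContinuousAt (fun u : ℝ => 1 + p*u) 0 := by fun_prop
    have c2 : ContinuousAt (fun u : ℝ => Real.log (1 + p*u)) 0 :=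
      ContinuousAt.log c1 (by norm_num)
    have c3 : ContinuousAt (fun u : ℝ => (1 - p^2*c)/(1 + p*u)) 0 :=
      ContinuousAt.div continuousAt_const c1 (by norm_num)
    have := ((c2.const_mul A).neg.add c3).mono_left
      (nhdsWithin_le_nhds (s := Set.Ioi (0:ℝ)))
    simpa [Pi.add_def, Pi.neg_def] using this
  have h3 := h1.atBot_add h2
  apply h3.congr'
  filter_upwards [self_mem_nhdsWithin] with u hu
  have hu' : (0:ℝ) < u := hu
  have hune : u ≠ 0 := hu'.ne'
  rw [Gf]
  field_simp
  ring

lemma Gf_exists {p c : ℝ} (hp : 0 < p) (hc : 0 < c) {b t : ℝ} (hb : 0 < b)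
    (hv : Gf p c b - t < Gf p c (2*b)) :
    ∃ u, 0 < u ∧ Gf p c u = Gf p c b - t := by
  set v := Gf p c b - t with hvdef
  have h2b : (0:ℝ) < 2*b := by linarith
  have ev1 : ∀ᶠ u in nhdsWithin 0 (Set.Ioi (0:ℝ)), Gf p c u < v :=
    (Gf_bot hp hc).eventually (eventually_lt_atBot v)
  have ev2 : ∀ᶠ u in nhdsWithin 0 (Set.Ioi (0:ℝ)), u < 2*b :=
    (eventually_lt_nhds h2b).filter_mono nhdsWithin_le_nhds
  obtain ⟨a, ⟨hGa, hab⟩, ha0⟩ := ((ev1.and ev2).and self_mem_nhdsWithin).exists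
  have ha0' : (0:ℝ) < a := ha0
  have hcont : ContinuousOn (Gf p c) (Set.Icc a (2*b)) := fun u hu =>
    ((Gf_deriv hp (lt_of_lt_of_le ha0' hu.1)).continuousAt).continuousWithinAt
  have hmem : v ∈ Set.Icc (Gf p c a) (Gf p c (2*b)) := ⟨hGa.le, hv.le⟩
  obtain ⟨u, humem, hGu⟩ := intermediate_value_Icc hab.le hcont hmem
  exact ⟨u, lt_of_lt_of_le ha0' humem.1, hGu⟩

lemma pair_limit (ε₂ c : ℝ) (y : ℝ → ℝ) (hy : Filter.Tendsto y Filter.atTop (nhds 0)) :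
    Filter.Tendsto (fun t => (y t, (c - (y t) ^ 2) / (1 + ε₂ * y t)))
      Filter.atTop (nhds ((0 : ℝ), c)) := by
  have hcont : ContinuousAt (fun u : ℝ => ((u : ℝ), (c - u ^ 2) / (1 + ε₂ * u))) 0 := by
    refine ContinuousAt.prodMk continuousAt_id ?_
    exact ContinuousAt.div (by fun_prop) (by fun_prop) (by norm_num)
  have := hcont.tendsto.comp hy
  simpa [Function.comp_def] using this

/-- In region B₂: (i) the reduced flow ż = y² on the attracting critical branch
z = (c − y²)/(1 + ε₂y) pulls back to the scalar ODE
ẏ = −y²(1 + ε₂y)²/(2y + ε₂y² + ε₂c), i.e. any positive solution of the scalar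
ODE induces a solution of ż = y² along the branch; (ii) the solution of the
scalar ODE with y(0) = √c exists for all t ≥ 0, satisfies 0 < y(t) ≤ √c, tends
to 0, and the corresponding point on the critical branch tends to (0, c). -/
theorem regionB2_reduced_flow
    (ε₂ c : ℝ) (hε₂ : 0 ≤ ε₂) (hc : 0 < c) :
    (∀ y : ℝ → ℝ, (∀ t : ℝ, 0 < y t) →
      (∀ t : ℝ, HasDerivAt y
        (-(y t) ^ 2 * (1 + ε₂ * y t) ^ 2 / (2 * y t + ε₂ * (y t) ^ 2 + ε₂ * c)) t) →
      ∀ t : ℝ, HasDerivAt (fun s => (c - (y s) ^ 2) / (1 + ε₂ * y s)) ((y t) ^ 2) t) ∧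
    (∃ y : ℝ → ℝ, y 0 = Real.sqrt c ∧
      (∀ t ≥ (0 : ℝ), HasDerivAt y
        (-(y t) ^ 2 * (1 + ε₂ * y t) ^ 2 / (2 * y t + ε₂ * (y t) ^ 2 + ε₂ * c)) t) ∧
      (∀ t ≥ (0 : ℝ), 0 < y t ∧ y t ≤ Real.sqrt c) ∧
      Filter.Tendsto y Filter.atTop (nhds 0) ∧
      Filter.Tendsto (fun t => (y t, (c - (y t) ^ 2) / (1 + ε₂ * y t)))
        Filter.atTop (nhds ((0 : ℝ), c))) := by
  constructor
  · -- Part (i): pull-back of the reduced flow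
    intro y hypos hy' t
    have hyt := hypos t
    have h1 : 0 < 1 + ε₂ * y t := by nlinarith [mul_nonneg hε₂ hyt.le]
    have h2 : 0 < 2 * y t + ε₂ * (y t) ^ 2 + ε₂ * c := by
      nlinarith [mul_nonneg hε₂ (sq_nonneg (y t)), mul_nonneg hε₂ hc.le]
    set d := -(y t) ^ 2 * (1 + ε₂ * y t) ^ 2 / (2 * y t + ε₂ * (y t) ^ 2 + ε₂ * c) with hd
    have hnum : HasDerivAt (fun s => c - (y s) ^ 2) (-(2 * y t ^ 1 * d)) t :=
      ((hy' t).pow 2).const_sub c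
    have hden : HasDerivAt (fun s => 1 + ε₂ * y s) (ε₂ * d) t :=
      ((hy' t).const_mul ε₂).const_add 1
    have := hnum.div hden h1.ne'
    refine this.congr_deriv ?_
    rw [hd]
    field_simp
    ring
  · -- Part (ii): the solution with y(0) = √c
    rcases hε₂.eq_or_lt with h0 | hp
    · -- Case ε₂ = 0 : explicit solution y(t) = √c · exp(−t/2)
      subst h0
      have hs : 0 < Real.sqrt c := Real.sqrt_pos.mpr hc
      have htend : Filter.Tendsto (fun t : ℝ => Real.sqrt c * Real.exp (-(t/2)))
          Filter.atTop (nhds 0) := by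
        have h1 : Filter.Tendsto (fun t : ℝ => -(t/2)) atTop atBot :=
          tendsto_neg_atBot_iff.mpr (tendsto_id.atTop_div_const two_pos)
        have := (Real.tendsto_exp_atBot.comp h1).const_mul (Real.sqrt c)
        simpa using this
      refine ⟨fun t => Real.sqrt c * Real.exp (-(t/2)), by simp, ?_, ?_, htend,
        pair_limit 0 c _ htend⟩
      · intro t _
        have hlin : HasDerivAt (fun t : ℝ => -(t/2)) (-(1/2)) t := by
          exact ((hasDerivAt_id t).div_const 2).neg.congr_deriv (by norm_num)
        have hexp : HasDerivAt (fun t : ℝ => Real.exp (-(t/2)))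
            (Real.exp (-(t/2)) * (-(1/2))) t :=
          (Real.hasDerivAt_exp _).comp t hlin
        have := hexp.const_mul (Real.sqrt c)
        refine this.congr_deriv ?_
        have he : Real.exp (-(t/2)) ≠ 0 := (Real.exp_pos _).ne'
        have hy : Real.sqrt c * Real.exp (-(t/2)) ≠ 0 := by positivity
        field_simp
        ring
      · intro t ht
        refine ⟨by positivity, ?_⟩
        have : Real.exp (-(t/2)) ≤ 1 := Real.exp_le_one_iff.mpr (by linarith)
        nlinarith [Real.exp_pos (-(t/2))]
    · -- Case ε₂ > 0 : solution via inversion of the antiderivative Gf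
      set p := ε₂ with hpdef
      set s := Real.sqrt c with hsdef
      have hs : 0 < s := Real.sqrt_pos.mpr hc
      have hmono := Gf_mono hp hc (c := c)
      have hinj := hmono.injOn
      have hL : Gf p c s - Gf p c (2*s) < 0 := sub_neg.mpr (hmono (Set.mem_Ioi.mpr hs)
        (Set.mem_Ioi.mpr (by linarith)) (by linarith))
      set L := Gf p c s - Gf p c (2*s) with hLdef
      set y : ℝ → ℝ := fun t => invFn (Gf p c) (Gf p c s - t) with hydef
      have hspec : ∀ t : ℝ, L < t → 0 < y t ∧ Gf p c (y t) = Gf p c s - t := by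
        intro t ht
        exact invFn_spec (Gf_exists hp hc hs (by simp only [hLdef] at ht; linarith))
      have hy0 : y 0 = s := by
        obtain ⟨h1, h2⟩ := hspec 0 (by linarith)
        refine hinj (Set.mem_Ioi.mpr h1) (Set.mem_Ioi.mpr hs) ?_
        rw [h2]; ring
      have hbound : ∀ t ≥ (0:ℝ), 0 < y t ∧ y t ≤ s := by
        intro t ht
        obtain ⟨h1, h2⟩ := hspec t (by linarith)
        refine ⟨h1, ?_⟩
        by_contra h
        push_neg at h
        have := hmono (Set.mem_Ioi.mpr hs) (Set.mem_Ioi.mpr h1) h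
        rw [h2] at this
        linarith
      -- continuity of y on (L, ∞)
      have hycont : ∀ t : ℝ, L < t → ContinuousAt y t := by
        intro t ht
        obtain ⟨hu0, hGu⟩ := hspec t ht
        rw [Metric.continuousAt_iff]
        intro ε hε
        have hminpos : 0 < min ε (y t) := lt_min hε hu0
        set a := y t - min ε (y t) / 2 with ha
        have ha0 : 0 < a := by
          have h1 := min_le_right ε (y t)
          simp only [ha]; linarith
        have hau : a < y t := by simp only [ha]; linarith
        set b := y t + ε/2 with hb
        have hub : y t < b := by simp only [hb]; linarith
        have hb0 : 0 < b := by linarith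
        have hGa : Gf p c a < Gf p c (y t) :=
          hmono (Set.mem_Ioi.mpr ha0) (Set.mem_Ioi.mpr hu0) hau
        have hGb : Gf p c (y t) < Gf p c b :=
          hmono (Set.mem_Ioi.mpr hu0) (Set.mem_Ioi.mpr hb0) hub
        refine ⟨min (Gf p c (y t) - Gf p c a) (min (Gf p c b - Gf p c (y t)) (t - L)),
          lt_min (by linarith) (lt_min (by linarith) (by linarith)), ?_⟩
        intro s' hs'
        rw [Real.dist_eq] at hs' ⊢
        obtain ⟨hl, hr⟩ := abs_lt.mp hs'
        have hη1 : min (Gf p c (y t) - Gf p c a) (min (Gf p c b - Gf p c (y t)) (t - L))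
            ≤ Gf p c (y t) - Gf p c a := min_le_left _ _
        have hη2 : min (Gf p c (y t) - Gf p c a) (min (Gf p c b - Gf p c (y t)) (t - L))
            ≤ Gf p c b - Gf p c (y t) := le_trans (min_le_right _ _) (min_le_left _ _)
        have hη3 : min (Gf p c (y t) - Gf p c a) (min (Gf p c b - Gf p c (y t)) (t - L))
            ≤ t - L := le_trans (min_le_right _ _) (min_le_right _ _)
        have hs'δ : L < s' := by linarith
        obtain ⟨hys'0, hGys'⟩ := hspec s' hs'δ
        have h4 : Gf p c (y s') - Gf p c (y t) = t - s' := by rw [hGys', hGu]; ring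
        have h5 : Gf p c a < Gf p c (y s') := by linarith
        have h6 : Gf p c (y s') < Gf p c b := by linarith
        have h7 : a < y s' := by
          by_contra h
          push_neg at h
          rcases eq_or_lt_of_le h with h' | h'
          · rw [h'] at h5; linarith
          · have := hmono (Set.mem_Ioi.mpr hys'0) (Set.mem_Ioi.mpr ha0) h'
            linarith
        have h8 : y s' < b := by
          by_contra h
          push_neg at h
          rcases eq_or_lt_of_le h with h' | h'
          · rw [← h'] at h6; linarith
          · have := hmono (Set.mem_Ioi.mpr hb0) (Set.mem_Ioi.mpr hys'0) h'
            linarith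
        have hmle := min_le_left ε (y t)
        rw [abs_lt]
        constructor
        · simp only [ha] at h7; linarith
        · simp only [hb] at h8; linarith
      -- limit y → 0 at +∞
      have htend : Filter.Tendsto y Filter.atTop (nhds 0) := by
        rw [Metric.tendsto_atTop]
        intro ε hε
        have hε' : 0 < min ε s := lt_min hε hs
        refine ⟨max 0 (Gf p c s - Gf p c (min ε s) + 1), fun t ht => ?_⟩
        have ht0 : 0 ≤ t := le_trans (le_max_left _ _) ht
        have ht1 : Gf p c s - Gf p c (min ε s) + 1 ≤ t := le_trans (le_max_right _ _) ht
        obtain ⟨h1, h2⟩ := hspec t (by linarith)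
        have hlt : y t < min ε s := by
          by_contra h
          push_neg at h
          rcases eq_or_lt_of_le h with h' | h'
          · have : Gf p c (min ε s) = Gf p c s - t := by rw [h']; exact h2
            linarith
          · have := hmono (Set.mem_Ioi.mpr hε') (Set.mem_Ioi.mpr h1) h'
            rw [h2] at this
            linarith
        rw [Real.dist_eq, sub_zero, abs_of_pos h1]
        exact lt_of_lt_of_le hlt (min_le_left _ _)
      refine ⟨y, hy0, ?_, fun t ht => hbound t ht, htend, pair_limit p c y htend⟩
      -- the ODE holds for t ≥ 0
      intro t ht
      have htδ : L < t := by linarith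
      obtain ⟨hu0, hGu⟩ := hspec t htδ
      have h1pu : 0 < 1 + p * y t := by nlinarith
      have hN : 0 < 2 * y t + p * (y t)^2 + p * c := by positivity
      have hD : 0 < (y t)^2 * (1 + p * y t)^2 := by positivity
      have hF : HasDerivAt (fun u => Gf p c s - Gf p c u)
          (-((2*(y t) + p*(y t)^2 + p*c)/((y t)^2*(1 + p*(y t))^2))) (y t) :=
        (Gf_deriv hp hu0).const_sub (Gf p c s)
      have hne : -((2*(y t) + p*(y t)^2 + p*c)/((y t)^2*(1 + p*(y t))^2)) ≠ 0 := by
        have := div_pos hN hD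
        linarith
      have hfg : ∀ᶠ s' in nhds t, Gf p c s - Gf p c (y s') = s' := by
        filter_upwards [eventually_gt_nhds htδ] with s' hs'
        rw [(hspec s' hs').2]; ring
      have := HasDerivAt.of_local_left_inverse (hycont t htδ) hF hne hfg
      refine this.congr_deriv ?_
      rw [← neg_inv, inv_div, neg_mul, neg_div]
end

section
/- Let ε ≥ 0 and c > 0 and consider the planar system z₁' = s₁ + 2z₁(s₁ + z₁ + 1 + s₁εc), s₁' = s₁(s₁ + z₁ + 1 + s₁εc). The set {(z₁, s₁) : s₁ ≥ 0, s₁ + z₁ ≤ 0} is forward invariant: every solution starting in this set remains in it for all forward times in its interval of existence. In particular, along the line s₁ = −z₁ one has (s₁ + z₁)' = −s₁²εc ≤ 0. -/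
open Set intervalIntegral MeasureTheory

lemma ftc_within {T : ℝ} {F : ℝ → ℝ} (hF : ContinuousOn F (Set.Icc 0 T)) {t : ℝ}
    (ht : t ∈ Set.Icc (0:ℝ) T) :
    HasDerivWithinAt (fun u => ∫ x in (0:ℝ)..u, F x) (F t) (Set.Icc 0 T) t := by
  haveI : Fact (t ∈ Set.Icc (0:ℝ) T) := ⟨ht⟩
  refine intervalIntegral.integral_hasDerivWithinAt_right ?_
    (hF.stronglyMeasurableAtFilter_nhdsWithin measurableSet_Icc t) (hF t ht)
  refine (hF.mono ?_).intervalIntegrable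
  rw [Set.uIcc_of_le ht.1]
  exact Set.Icc_subset_Icc le_rfl ht.2

lemma key_nonpos {T : ℝ} {w G r : ℝ → ℝ}
    (hG : ContinuousOn G (Set.Icc 0 T))
    (hw : ∀ t ∈ Set.Icc (0:ℝ) T, HasDerivWithinAt w (w t * G t + r t) (Set.Icc 0 T) t)
    (hr : ∀ t ∈ Set.Icc (0:ℝ) T, r t ≤ 0)
    (h0 : w 0 ≤ 0) : ∀ t ∈ Set.Icc (0:ℝ) T, w t ≤ 0 := by
  intro t ht
  have h0T : (0:ℝ) ∈ Set.Icc (0:ℝ) T := ⟨le_rfl, le_trans ht.1 ht.2⟩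
  set E : ℝ → ℝ := fun u => Real.exp (-∫ x in (0:ℝ)..u, G x) with hE
  have hEpos : ∀ u, 0 < E u := fun u => Real.exp_pos _
  have hEderiv : ∀ u ∈ Set.Icc (0:ℝ) T, HasDerivWithinAt E (E u * (-G u)) (Set.Icc 0 T) u := by
    intro u hu
    exact ((ftc_within hG hu).neg).exp
  set v : ℝ → ℝ := fun u => w u * E u with hv
  have hvderiv : ∀ u ∈ Set.Icc (0:ℝ) T, HasDerivWithinAt v (r u * E u) (Set.Icc 0 T) u := by
    intro u hu
    have h1 := (hw u hu).mul (hEderiv u hu)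
    have h2 : (w u * G u + r u) * E u + w u * (E u * -G u) = r u * E u := by ring
    exact h2 ▸ h1
  have hvcont : ContinuousOn v (Set.Icc 0 T) :=
    fun u hu => ((hvderiv u hu).continuousWithinAt)
  have hanti : AntitoneOn v (Set.Icc 0 T) := by
    refine antitoneOn_of_hasDerivWithinAt_nonpos (convex_Icc 0 T) hvcont
      (f' := fun u => r u * E u) ?_ ?_
    · intro x hx
      rw [interior_Icc] at hx
      exact (hvderiv x ⟨hx.1.le, hx.2.le⟩).mono interior_subset
    · intro x hx
      rw [interior_Icc] at hx
      exact mul_nonpos_of_nonpos_of_nonneg (hr x ⟨hx.1.le, hx.2.le⟩) (hEpos x).le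
  have hv0 : v 0 = w 0 := by
    simp [hv, hE]
  have := hanti h0T ht ht.1
  rw [hv0] at this
  have hle : w t * E t ≤ 0 * E t := by
    simpa [hv] using le_trans this h0
  exact le_of_mul_le_mul_right hle (hEpos t)


/-- For the chart-K¹₁₁ on-sphere system
z₁' = s₁ + 2z₁(s₁ + z₁ + 1 + s₁εc), s₁' = s₁(s₁ + z₁ + 1 + s₁εc) with ε ≥ 0 and
c > 0, the set {(z₁, s₁) : s₁ ≥ 0, s₁ + z₁ ≤ 0} is forward invariant; in
particular, along the line s₁ = −z₁ one has (s₁ + z₁)' = −s₁²εc ≤ 0. -/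
theorem chartK111_trapping_halfregion
    (ε c : ℝ) (hε : 0 ≤ ε) (hc : 0 < c) :
    (∀ z s : ℝ, s + z = 0 →
      (s + 2 * z * (s + z + 1 + s * ε * c)) + (s * (s + z + 1 + s * ε * c)) =
        -(s ^ 2) * ε * c ∧ -(s ^ 2) * ε * c ≤ 0) ∧
    (∀ T : ℝ, ∀ z s : ℝ → ℝ,
      (∀ t ∈ Set.Icc (0 : ℝ) T, HasDerivWithinAt z
        (s t + 2 * z t * (s t + z t + 1 + s t * ε * c)) (Set.Icc 0 T) t) →
      (∀ t ∈ Set.Icc (0 : ℝ) T, HasDerivWithinAt s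
        (s t * (s t + z t + 1 + s t * ε * c)) (Set.Icc 0 T) t) →
      0 ≤ s 0 → s 0 + z 0 ≤ 0 →
      ∀ t ∈ Set.Icc (0 : ℝ) T, 0 ≤ s t ∧ s t + z t ≤ 0) := by
  constructor
  · intro z s hzs
    have hz : z = -s := by linarith
    subst hz
    constructor
    · ring
    · nlinarith [sq_nonneg s, mul_nonneg hε hc.le]
  · intro T z s hz hs hs0 hw0
    -- continuity
    have hscont : ContinuousOn s (Set.Icc 0 T) := fun t ht => (hs t ht).continuousWithinAt
    have hzcont : ContinuousOn z (Set.Icc 0 T) := fun t ht => (hz t ht).continuousWithinAt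
    have hFcont : ContinuousOn (fun t => s t + z t + 1 + s t * ε * c) (Set.Icc 0 T) := by
      fun_prop
    -- Part 1 : 0 ≤ s t, via w = -s, w' = w * F
    have hpart1 : ∀ t ∈ Set.Icc (0:ℝ) T, 0 ≤ s t := by
      have := key_nonpos (T := T) (w := fun t => -s t)
        (G := fun t => s t + z t + 1 + s t * ε * c) (r := fun _ => 0)
        hFcont ?_ (fun _ _ => le_rfl) (show -s 0 ≤ 0 by linarith)
      · intro t ht
        linarith [show -s t ≤ 0 from this t ht]
      · intro t ht
        have h1 := (hs t ht).neg
        have h2 : -(s t * (s t + z t + 1 + s t * ε * c)) =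
            (fun t => -s t) t * (s t + z t + 1 + s t * ε * c) + (fun _ : ℝ => (0:ℝ)) t :=
          show -(s t * (s t + z t + 1 + s t * ε * c)) =
            -s t * (s t + z t + 1 + s t * ε * c) + 0 by ring
        exact h2 ▸ h1
    -- Part 2 : s t + z t ≤ 0, via w = s + z, w' = w * G + r, r = -s² ε c
    have hpart2 : ∀ t ∈ Set.Icc (0:ℝ) T, s t + z t ≤ 0 := by
      refine key_nonpos (T := T) (w := fun t => s t + z t)
        (G := fun t => 2 * (s t + z t + 1 + s t * ε * c) - s t)
        (r := fun t => -(s t ^ 2) * ε * c) ?_ ?_ ?_ hw0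
      · fun_prop
      · intro t ht
        have h1 := (hs t ht).add (hz t ht)
        have h2 : s t * (s t + z t + 1 + s t * ε * c) +
            (s t + 2 * z t * (s t + z t + 1 + s t * ε * c)) =
            (fun t => s t + z t) t * ((fun t => 2 * (s t + z t + 1 + s t * ε * c) - s t) t) +
            (fun t => -(s t ^ 2) * ε * c) t :=
          show s t * (s t + z t + 1 + s t * ε * c) +
            (s t + 2 * z t * (s t + z t + 1 + s t * ε * c)) =
            (s t + z t) * (2 * (s t + z t + 1 + s t * ε * c) - s t) +
            -(s t ^ 2) * ε * c by ring
        exact h2 ▸ h1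
      · intro t ht
        show -(s t ^ 2) * ε * c ≤ 0
        nlinarith [sq_nonneg (s t), mul_nonneg hε hc.le]
    exact fun t ht => ⟨hpart1 t ht, hpart2 t ht⟩
end

section
/- Let ε ≥ 0 and c > 0 and consider the planar system y₂' = −y₂ − z₂ − y₂² − εc·y₂, z₂' = y₂². The set Ω = {(y₂, z₂) : y₂ ≥ 0, y₂ + z₂ ≤ 0} is forward invariant: every solution starting in Ω remains in Ω for all t ≥ 0. In particular, y₂' = −z₂ ≥ 0 on the boundary piece {y₂ = 0, z₂ ≤ 0} and (y₂ + z₂)' = −εc·y₂ ≤ 0 on the boundary piece {z₂ = −y₂, y₂ ≥ 0}. -/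
open Real Set Filter Asymptotics

lemma hasDerivAt_maxsq (x : ℝ) : HasDerivAt (fun u : ℝ => max u 0 ^ 2) (2 * max x 0) x := by
  rcases lt_trichotomy x 0 with h | h | h
  · have hev : (fun u : ℝ => max u 0 ^ 2) =ᶠ[nhds x] fun _ => (0 : ℝ) := by
      filter_upwards [Iio_mem_nhds h] with u hu
      simp [max_eq_right (le_of_lt (mem_Iio.mp hu))]
    rw [max_eq_right h.le, mul_zero]
    exact (hasDerivAt_const x (0:ℝ)).congr_of_eventuallyEq hev
  · subst h
    rw [hasDerivAt_iff_isLittleO]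
    simp only [max_self, ne_eq, OfNat.ofNat_ne_zero, not_false_eq_true, zero_pow, mul_zero,
      smul_zero, sub_zero]
    have h1 : (fun u : ℝ => u ^ 2) =o[nhds (0:ℝ)] fun u => u := by
      have := hasDerivAt_iff_isLittleO.mp (hasDerivAt_pow 2 (0:ℝ))
      simpa using this
    have h2 : (fun u : ℝ => max u 0 ^ 2) =O[nhds (0:ℝ)] fun u => u ^ 2 := by
      apply IsBigO.of_bound 1
      filter_upwards with u
      rw [one_mul, Real.norm_eq_abs, Real.norm_eq_abs, abs_of_nonneg (by positivity),
        abs_of_nonneg (by positivity)]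
      rcases le_or_gt 0 u with hu | hu
      · rw [max_eq_left hu]
      · simp [max_eq_right hu.le, pow_two_nonneg]
    exact h2.trans_isLittleO h1
  · have hev : (fun u : ℝ => max u 0 ^ 2) =ᶠ[nhds x] fun u => u ^ 2 := by
      filter_upwards [Ioi_mem_nhds h] with u hu
      simp [max_eq_left (le_of_lt (mem_Ioi.mp hu))]
    rw [max_eq_left h.le]
    have := hasDerivAt_pow 2 x
    norm_num at this
    exact this.congr_of_eventuallyEq hev

lemma omega_bound (a b Y w k M : ℝ) (ha : 0 ≤ a) (hb : 0 ≤ b)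
    (haY : a * (a + Y) = 0) (hbw : b * (b - w) = 0)
    (haY2 : -Y ≤ a) (hwb : w ≤ b) (haM : a ≤ M) (hk : 0 ≤ k) :
    2 * a * (w + Y ^ 2 + k * Y) + 2 * b * (-w - k * Y) ≤
      (1 + k + 2 * M) * (a ^ 2 + b ^ 2) := by
  have hay : a * Y = -a ^ 2 := by linear_combination haY
  have hbw2 : b * w = b ^ 2 := by linear_combination -hbw
  have hay2 : a * Y ^ 2 = a ^ 3 := by linear_combination (Y - a) * hay
  have hM0 : 0 ≤ M := ha.trans haM
  have h1 : a * w ≤ a * b := mul_le_mul_of_nonneg_left hwb ha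
  have h2 : 2 * (a * b) ≤ a ^ 2 + b ^ 2 := by nlinarith [sq_nonneg (a - b)]
  have h3 : a ^ 3 ≤ M * a ^ 2 := by nlinarith [sq_nonneg a]
  have h4 : k * (b * (-Y)) ≤ k * (b * a) := by
    apply mul_le_mul_of_nonneg_left _ hk
    exact mul_le_mul_of_nonneg_left haY2 hb
  have h5 : k * (2 * (a * b)) ≤ k * (a ^ 2 + b ^ 2) := mul_le_mul_of_nonneg_left h2 hk
  have h6 : k * a ^ 2 ≥ 0 := by positivity
  have h7 : M * a ^ 2 ≤ M * (a ^ 2 + b ^ 2) := by nlinarith [sq_nonneg b]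
  nlinarith [sq_nonneg b]

/-- For the scaling-chart system y₂' = −y₂ − z₂ − y₂² − εc·y₂, z₂' = y₂² with
ε ≥ 0 and c > 0, the set Ω = {(y₂, z₂) : y₂ ≥ 0, y₂ + z₂ ≤ 0} is forward
invariant; in particular y₂' = −z₂ ≥ 0 on the boundary piece {y₂ = 0, z₂ ≤ 0},
and (y₂ + z₂)' = −εc·y₂ ≤ 0 on the boundary piece {z₂ = −y₂, y₂ ≥ 0}. -/
theorem chartK112_Omega_forward_invariant
    (ε c : ℝ) (hε : 0 ≤ ε) (hc : 0 < c) :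
    (∀ z₂ : ℝ, z₂ ≤ 0 →
      -(0 : ℝ) - z₂ - (0 : ℝ) ^ 2 - ε * c * 0 = -z₂ ∧ 0 ≤ -z₂) ∧
    (∀ y₂ : ℝ, 0 ≤ y₂ →
      (-y₂ - (-y₂) - y₂ ^ 2 - ε * c * y₂) + y₂ ^ 2 = -(ε * c * y₂) ∧
      -(ε * c * y₂) ≤ 0) ∧
    (∀ y z : ℝ → ℝ,
      (∀ t ≥ (0 : ℝ), HasDerivAt y (-y t - z t - (y t) ^ 2 - ε * c * y t) t) →
      (∀ t ≥ (0 : ℝ), HasDerivAt z ((y t) ^ 2) t) →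
      0 ≤ y 0 → y 0 + z 0 ≤ 0 →
      ∀ t ≥ (0 : ℝ), 0 ≤ y t ∧ y t + z t ≤ 0) := by
  have hk : 0 ≤ ε * c := mul_nonneg hε hc.le
  refine ⟨fun z₂ hz₂ => ⟨by ring, by linarith⟩,
    fun y₂ hy₂ => ⟨by ring, by nlinarith⟩, ?_⟩
  intro y z hy hz hy0 hw0 t ht
  set V : ℝ → ℝ := fun s => max (-(y s)) 0 ^ 2 + max (y s + z s) 0 ^ 2 with hV
  set F : ℝ → ℝ := fun s =>
    2 * max (-(y s)) 0 * (-(-y s - z s - (y s) ^ 2 - ε * c * y s)) +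
    2 * max (y s + z s) 0 * ((-y s - z s - (y s) ^ 2 - ε * c * y s) + (y s) ^ 2) with hF
  -- derivative of V at every s ≥ 0
  have hVd : ∀ s : ℝ, 0 ≤ s → HasDerivAt V (F s) s := by
    intro s hs
    have h1 : HasDerivAt (fun u => max (-(y u)) 0 ^ 2)
        (2 * max (-(y s)) 0 * (-(-y s - z s - (y s) ^ 2 - ε * c * y s))) s :=
      by have := (hasDerivAt_maxsq (-(y s))).comp s (hy s hs).neg; exact this
    have h2 : HasDerivAt (fun u => max (y u + z u) 0 ^ 2)
        (2 * max (y s + z s) 0 * ((-y s - z s - (y s) ^ 2 - ε * c * y s) + (y s) ^ 2)) s :=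
      by have := (hasDerivAt_maxsq (y s + z s)).comp s ((hy s hs).add (hz s hs)); exact this
    exact h1.add h2
  -- a bound M for max (-(y s)) 0 on [0, t]
  obtain ⟨s₀, hs₀, hM⟩ := isCompact_Icc.exists_isMaxOn (nonempty_Icc.mpr ht)
    (show ContinuousOn (fun s => max (-(y s)) 0) (Icc 0 t) from
      fun s hs => ContinuousAt.continuousWithinAt (ContinuousAt.sup (hy s hs.1).continuousAt.neg continuousAt_const))
  set M : ℝ := max (-(y s₀)) 0 with hMdef
  have hM0 : 0 ≤ M := le_max_right _ _
  set K : ℝ := 1 + ε * c + 2 * M with hK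
  have key : ∀ x ∈ Icc (0:ℝ) t, V x ≤ gronwallBound 0 K 0 (x - 0) := by
    apply le_gronwallBound_of_liminf_deriv_right_le (f' := F)
    · exact fun s hs => (hVd s hs.1).continuousAt.continuousWithinAt
    · intro x hx r hr
      exact ((hVd x hx.1).hasDerivWithinAt).liminf_right_slope_le hr
    · simp only [hV]
      have h1 : max (-(y 0)) 0 = 0 := max_eq_right (by linarith)
      have h2 : max (y 0 + z 0) 0 = 0 := max_eq_right hw0
      rw [h1, h2]; norm_num
    · intro x hx
      have ha : (0:ℝ) ≤ max (-(y x)) 0 := le_max_right _ _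
      have hb : (0:ℝ) ≤ max (y x + z x) 0 := le_max_right _ _
      have haY : max (-(y x)) 0 * (max (-(y x)) 0 + y x) = 0 := by
        rcases le_or_gt (-(y x)) 0 with h | h
        · rw [max_eq_right h]; ring
        · rw [max_eq_left h.le]; ring
      have hbw : max (y x + z x) 0 * (max (y x + z x) 0 - (y x + z x)) = 0 := by
        rcases le_or_gt (y x + z x) 0 with h | h
        · rw [max_eq_right h]; ring
        · rw [max_eq_left h.le]; ring
      have haY2 : -(y x) ≤ max (-(y x)) 0 := le_max_left _ _
      have hwb : y x + z x ≤ max (y x + z x) 0 := le_max_left _ _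
      have haM : max (-(y x)) 0 ≤ M := hM ⟨hx.1, hx.2.le⟩
      have := omega_bound (max (-(y x)) 0) (max (y x + z x) 0) (y x) (y x + z x)
        (ε * c) M ha hb haY hbw haY2 hwb haM hk
      simp only [hF, hV, hK]
      calc 2 * max (-(y x)) 0 * (-(-y x - z x - (y x) ^ 2 - ε * c * y x)) +
            2 * max (y x + z x) 0 * ((-y x - z x - (y x) ^ 2 - ε * c * y x) + (y x) ^ 2)
          = 2 * max (-(y x)) 0 * ((y x + z x) + (y x) ^ 2 + ε * c * (y x)) +
            2 * max (y x + z x) 0 * (-(y x + z x) - ε * c * (y x)) := by ring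
        _ ≤ (1 + ε * c + 2 * M) * (max (-(y x)) 0 ^ 2 + max (y x + z x) 0 ^ 2) := this
        _ ≤ (1 + ε * c + 2 * M) * (max (-(y x)) 0 ^ 2 + max (y x + z x) 0 ^ 2) + 0 := by
            linarith
  have hVt : V t ≤ 0 := by
    have := key t ⟨ht, le_refl t⟩
    rwa [gronwallBound_ε0_δ0] at this
  have hVt' : max (-(y t)) 0 ^ 2 + max (y t + z t) 0 ^ 2 ≤ 0 := hVt
  constructor
  · nlinarith [le_max_left (-(y t)) 0, le_max_right (-(y t)) 0, sq_nonneg (max (y t + z t) 0)]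
  · nlinarith [le_max_left (y t + z t) 0, le_max_right (y t + z t) 0, sq_nonneg (max (-(y t)) 0)]
end

section
/- Let ε ≥ 0 and c > 0 and consider the planar system y₂' = −y₂ − z₂ − y₂² − εc·y₂, z₂' = y₂². Every solution with initial value satisfying y₂(0) > 0 and y₂(0) + z₂(0) < 0 exists for all t ≥ 0 and converges to the equilibrium Q₂ = (0, 0) as t → ∞. -/
set_option maxHeartbeats 1000000

open Set Filter Topology

private lemma auxMono {a b : ℝ} {f f' : ℝ → ℝ}
    (hf : ∀ t ∈ Set.Icc a b, HasDerivAt f (f' t) t)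
    (h0 : ∀ t ∈ Set.Icc a b, 0 ≤ f' t) (hab : a ≤ b) : f a ≤ f b := by
  have hm : MonotoneOn f (Set.Icc a b) := by
    apply monotoneOn_of_deriv_nonneg (convex_Icc a b)
    · exact fun t ht => (hf t ht).continuousAt.continuousWithinAt
    · intro t ht
      rw [interior_Icc] at ht
      exact ((hf t (Set.Ioo_subset_Icc_self ht)).differentiableAt).differentiableWithinAt
    · intro t ht
      rw [interior_Icc] at ht
      rw [(hf t (Set.Ioo_subset_Icc_self ht)).deriv]
      exact h0 t (Set.Ioo_subset_Icc_self ht)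
  exact hm (Set.left_mem_Icc.2 hab) (Set.right_mem_Icc.2 hab) hab

private lemma auxAnti {a b : ℝ} {f f' : ℝ → ℝ}
    (hf : ∀ t ∈ Set.Icc a b, HasDerivAt f (f' t) t)
    (h0 : ∀ t ∈ Set.Icc a b, f' t ≤ 0) (hab : a ≤ b) : f b ≤ f a := by
  have := auxMono (f := fun t => -f t) (f' := fun t => -(f' t))
    (fun t ht => (hf t ht).neg) (fun t ht => neg_nonneg.2 (h0 t ht)) hab
  linarith

/-- left-limit bound: if `f t ≤ c` on `[0, τ)` and `f` is continuous at `τ > 0`, then `f τ ≤ c`. -/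
private lemma auxLeftLim {τ c : ℝ} {f : ℝ → ℝ} (hτ : 0 < τ) (hcont : ContinuousAt f τ)
    (h : ∀ t, 0 ≤ t → t < τ → f t ≤ c) : f τ ≤ c := by
  have hmax : max 0 (τ - 1) < τ := by
    apply max_lt hτ; linarith
  have hmem : Set.Ioo (max 0 (τ - 1)) τ ∈ 𝓝[<] τ := Ioo_mem_nhdsLT_of_mem ⟨hmax, le_refl τ⟩
  refine le_of_tendsto (hcont.continuousWithinAt (s := Set.Iio τ)) ?_
  filter_upwards [hmem] with t ht
  exact h t (le_trans (le_max_left 0 (τ - 1)) ht.1.le) ht.2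

/-- if `f t < f τ` for all `t ∈ [0, τ)` then the derivative of `f` at `τ` is nonnegative. -/
private lemma auxSlopeLower {τ d : ℝ} {f : ℝ → ℝ} (hτ : 0 < τ) (hd : HasDerivAt f d τ)
    (hlt : ∀ t, 0 ≤ t → t < τ → f t < f τ) : 0 ≤ d := by
  by_contra hneg
  push_neg at hneg
  have h1 := hasDerivAt_iff_tendsto_slope.1 hd
  have h2 : ∀ᶠ t in 𝓝[≠] τ, slope f τ t < 0 := h1.eventually_lt_const hneg
  have hsub : 𝓝[<] τ ≤ 𝓝[≠] τ := nhdsWithin_mono τ (fun x hx => ne_of_lt hx)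
  have h3 : ∀ᶠ t in 𝓝[<] τ, slope f τ t < 0 := h2.filter_mono hsub
  have hmax : max 0 (τ - 1) < τ := by apply max_lt hτ; linarith
  have hmem : Set.Ioo (max 0 (τ - 1)) τ ∈ 𝓝[<] τ := Ioo_mem_nhdsLT_of_mem ⟨hmax, le_refl τ⟩
  obtain ⟨t, hslope, ht⟩ := (h3.and (eventually_of_mem hmem (fun x hx => hx))).exists
  have ht0 : 0 ≤ t := le_trans (le_max_left 0 (τ - 1)) ht.1.le
  have htτ : t < τ := ht.2
  have hlt' := hlt t ht0 htτ
  rw [slope_def_field] at hslope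
  have : 0 < (f t - f τ) / (t - τ) := div_pos_of_neg_of_neg (by linarith) (by linarith)
  linarith

/-- Invariance of the region `{0 < y < M, y + z < 0}` on `[0, T]`. -/
private lemma auxInv (ε c : ℝ) (hε : 0 ≤ ε) (hc : 0 < c)
    (y₀ z₀ : ℝ) (hy₀ : 0 < y₀) (hsum : y₀ + z₀ < 0)
    (T : ℝ) (y z : ℝ → ℝ) (hy0 : y 0 = y₀) (hz0 : z 0 = z₀)
    (hy : ∀ t ∈ Set.Icc 0 T, HasDerivAt y (-y t - z t - (y t) ^ 2 - ε * c * y t) t)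
    (hz : ∀ t ∈ Set.Icc 0 T, HasDerivAt z ((y t) ^ 2) t) :
    ∀ t ∈ Set.Icc 0 T, (0 < y t ∧ y t < max y₀ (Real.sqrt (-z₀)) + 1) ∧ y t + z t < 0 := by
  set M : ℝ := max y₀ (Real.sqrt (-z₀)) + 1 with hMdef
  have hz₀neg : z₀ < 0 := by linarith
  have hsqrt : Real.sqrt (-z₀) ^ 2 = -z₀ := Real.sq_sqrt (by linarith)
  have hsqrt0 : 0 ≤ Real.sqrt (-z₀) := Real.sqrt_nonneg _
  have hMy : y₀ < M := by
    have := le_max_left y₀ (Real.sqrt (-z₀)); simp only [hMdef]; linarith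
  have hM0 : 0 < M := lt_trans hy₀ hMy
  have hMsq : -z₀ < M ^ 2 := by
    have h1 : Real.sqrt (-z₀) + 1 ≤ M := by
      have := le_max_right y₀ (Real.sqrt (-z₀)); simp only [hMdef]; linarith
    nlinarith
  -- the bad set
  by_contra hcon
  push_neg at hcon
  obtain ⟨t₁, ht₁, hbad₁⟩ := hcon
  set B : Set ℝ := {t | t ∈ Set.Icc 0 T ∧
      (y t ≤ 0 ∨ M ≤ y t ∨ 0 ≤ y t + z t)} with hBdef
  have hBne : B.Nonempty := by
    refine ⟨t₁, ht₁, ?_⟩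
    rcases le_or_gt (y t₁) 0 with h | h
    · exact Or.inl h
    rcases le_or_gt M (y t₁) with h' | h'
    · exact Or.inr (Or.inl h')
    · exact Or.inr (Or.inr (hbad₁ ⟨h, h'⟩))
  have hcontOn : ContinuousOn (fun t => (y t, z t)) (Set.Icc 0 T) := fun t ht =>
    ((hy t ht).continuousAt.prodMk (hz t ht).continuousAt).continuousWithinAt
  have hBclosed : IsClosed B := by
    have : B = Set.Icc 0 T ∩ (fun t => (y t, z t)) ⁻¹'
        {p : ℝ × ℝ | p.1 ≤ 0 ∨ M ≤ p.1 ∨ 0 ≤ p.1 + p.2} := by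
      ext t; simp [hBdef, Set.mem_setOf_eq]
    rw [this]
    apply hcontOn.preimage_isClosed_of_isClosed isClosed_Icc
    apply IsClosed.union
    · exact isClosed_le continuous_fst continuous_const
    apply IsClosed.union
    · exact isClosed_le continuous_const continuous_fst
    · exact isClosed_le continuous_const (continuous_fst.add continuous_snd)
  have hBbdd : BddBelow B := ⟨0, fun x hx => hx.1.1⟩
  set τ : ℝ := sInf B with hτdef
  have hτB : τ ∈ B := hBclosed.csInf_mem hBne hBbdd
  have hτIcc : τ ∈ Set.Icc 0 T := hτB.1
  have hτ0 : 0 < τ := by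
    rcases eq_or_lt_of_le hτIcc.1 with h0 | h
    · exfalso
      have := hτB.2
      rw [← h0, hy0, hz0] at this
      rcases this with h' | h' | h' <;> linarith
    · exact h
  have hbefore : ∀ t, 0 ≤ t → t < τ → (0 < y t ∧ y t < M) ∧ y t + z t < 0 := by
    intro t h0 hlt
    by_contra hn
    have htB : t ∈ B := by
      refine ⟨⟨h0, le_trans hlt.le hτIcc.2⟩, ?_⟩
      rcases le_or_gt (y t) 0 with h | h
      · exact Or.inl h
      rcases le_or_gt M (y t) with h' | h'
      · exact Or.inr (Or.inl h')
      rcases le_or_gt 0 (y t + z t) with h'' | h''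
      · exact Or.inr (Or.inr h'')
      · exact absurd ⟨⟨h, h'⟩, h''⟩ hn
    exact absurd (csInf_le hBbdd htB) (not_le.2 hlt)
  have hIccτ : Set.Icc (0:ℝ) τ ⊆ Set.Icc 0 T :=
    Set.Icc_subset_Icc_right hτIcc.2
  -- z is nondecreasing on [0, τ]
  have hzmono : ∀ s t, 0 ≤ s → s ≤ t → t ≤ τ → z s ≤ z t := by
    intro s t h0 hst htτ
    exact auxMono (f' := fun u => (y u) ^ 2)
      (fun u hu => hz u (hIccτ ⟨le_trans h0 hu.1, le_trans hu.2 htτ⟩))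
      (fun u hu => sq_nonneg _) hst
  -- z ≤ 0 on [0, τ]
  have hzneg : ∀ t, 0 ≤ t → t < τ → z t ≤ 0 := by
    intro t h0 hlt
    have h := hbefore t h0 hlt
    linarith [h.1.1, h.2]
  have hzτ : z τ ≤ 0 :=
    auxLeftLim hτ0 (hz τ (hIccτ ⟨hτ0.le, le_refl τ⟩)).continuousAt hzneg
  have hzle0 : ∀ t, t ∈ Set.Icc 0 τ → z t ≤ 0 := by
    intro t ht
    rcases lt_or_eq_of_le ht.2 with h | h
    · exact hzneg t ht.1 h
    · rw [h]; exact hzτ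
  -- S τ < 0 via the exponentially weighted quantity
  have hSτ : y τ + z τ < 0 := by
    set k : ℝ := 1 + ε * c with hkdef
    have hk : 0 < k := by have := mul_nonneg hε hc.le; simp only [hkdef]; linarith
    set V : ℝ → ℝ := fun t => Real.exp (k * t) * (y t + z t) with hVdef
    have hV : ∀ t ∈ Set.Icc 0 τ, HasDerivAt V (Real.exp (k * t) * (ε * c * z t)) t := by
      intro t ht
      have hE : HasDerivAt (fun u => Real.exp (k * u)) (Real.exp (k * t) * k) t := by
        have := ((hasDerivAt_id t).const_mul k).exp
        simpa using this
      have hS : HasDerivAt (fun u => y u + z u)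
          ((-y t - z t - (y t) ^ 2 - ε * c * y t) + (y t) ^ 2) t :=
        (hy t (hIccτ ht)).add (hz t (hIccτ ht))
      have := hE.mul hS
      refine this.congr_deriv ?_
      simp only [hkdef]
      ring
    have hVle : V τ ≤ V 0 := by
      apply auxAnti hV _ hτ0.le
      intro t ht
      have h1 : z t ≤ 0 := hzle0 t ht
      have h2 : 0 ≤ ε * c := mul_nonneg hε hc.le
      have h3 : ε * c * z t ≤ 0 := mul_nonpos_of_nonneg_of_nonpos h2 h1
      exact mul_nonpos_of_nonneg_of_nonpos (Real.exp_pos (k * t)).le h3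
    have hV0 : V 0 = y₀ + z₀ := by simp [hVdef, hy0, hz0]
    have hVτ : V τ = Real.exp (k * τ) * (y τ + z τ) := rfl
    nlinarith [Real.exp_pos (k * τ), hVle, hV0]
  -- y τ ≥ 0 and y τ ≤ M by left limits
  have hyτ0 : 0 ≤ y τ := by
    have := auxLeftLim (f := fun t => -y t) (c := 0) hτ0
      (hy τ (hIccτ ⟨hτ0.le, le_refl τ⟩)).continuousAt.neg
      (fun t h0 hlt => by
        have := (hbefore t h0 hlt).1.1
        show -y t ≤ 0
        linarith)
    simp only [neg_nonpos] at this
    linarith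
  have hyτM : y τ ≤ M :=
    auxLeftLim hτ0 (hy τ (hIccτ ⟨hτ0.le, le_refl τ⟩)).continuousAt
      (fun t h0 hlt => (hbefore t h0 hlt).1.2.le)
  have hzτz₀ : z₀ ≤ z τ := by
    have := hzmono 0 τ (le_refl 0) hτ0.le (le_refl τ)
    rwa [hz0] at this
  -- case analysis on how the region is exited
  rcases hτB.2 with hcase | hcase | hcase
  · -- y τ = 0, but derivative there is -S τ > 0
    have hyτ : y τ = 0 := le_antisymm hcase hyτ0
    have hd := hy τ (hIccτ ⟨hτ0.le, le_refl τ⟩)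
    have hdpos : 0 < -y τ - z τ - (y τ) ^ 2 - ε * c * y τ := by
      rw [hyτ]; simp; linarith [hSτ, hyτ]
    -- y hits 0 from strictly above: derivative must be ≤ 0
    have : 0 ≤ -(-y τ - z τ - (y τ) ^ 2 - ε * c * y τ) := by
      apply auxSlopeLower (f := fun t => -y t) hτ0 hd.neg
      intro t h0 hlt
      have := (hbefore t h0 hlt).1.1
      show -y t < -y τ
      rw [hyτ]
      linarith
    linarith
  · -- y τ = M, but derivative there is negative
    have hyτ : y τ = M := le_antisymm hyτM hcase
    have hd := hy τ (hIccτ ⟨hτ0.le, le_refl τ⟩)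
    have hdneg : -y τ - z τ - (y τ) ^ 2 - ε * c * y τ < 0 := by
      rw [hyτ]
      have h1 : -z τ ≤ -z₀ := by linarith
      have h2 : 0 ≤ ε * c * M := mul_nonneg (mul_nonneg hε hc.le) hM0.le
      nlinarith
    have : 0 ≤ -y τ - z τ - (y τ) ^ 2 - ε * c * y τ := by
      apply auxSlopeLower hτ0 hd
      intro t h0 hlt
      rw [hyτ]
      exact (hbefore t h0 hlt).1.2
    linarith
  · linarith

/-- Every global forward solution converges to the origin. -/
private lemma auxConv (ε c : ℝ) (hε : 0 ≤ ε) (hc : 0 < c)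
    (y₀ z₀ : ℝ) (hy₀ : 0 < y₀) (hsum : y₀ + z₀ < 0)
    (y z : ℝ → ℝ) (hy0 : y 0 = y₀) (hz0 : z 0 = z₀)
    (hy : ∀ t ≥ (0 : ℝ), HasDerivAt y (-y t - z t - (y t) ^ 2 - ε * c * y t) t)
    (hz : ∀ t ≥ (0 : ℝ), HasDerivAt z ((y t) ^ 2) t) :
    Filter.Tendsto (fun t => (y t, z t)) Filter.atTop (nhds ((0 : ℝ), (0 : ℝ))) := by
  set M : ℝ := max y₀ (Real.sqrt (-z₀)) + 1 with hMdef
  have hεc : 0 ≤ ε * c := mul_nonneg hε hc.le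
  have hk : 0 < 1 + ε * c := by linarith
  have hkne : (1 + ε * c) ≠ 0 := hk.ne'
  have hreg : ∀ t ≥ (0:ℝ), (0 < y t ∧ y t < M) ∧ y t + z t < 0 := by
    intro t ht
    exact auxInv ε c hε hc y₀ z₀ hy₀ hsum t y z hy0 hz0
      (fun s hs => hy s hs.1) (fun s hs => hz s hs.1) t ⟨ht, le_refl t⟩
  have hzmono : ∀ s t : ℝ, 0 ≤ s → s ≤ t → z s ≤ z t := by
    intro s t h0 hst
    exact auxMono (f' := fun u => (y u) ^ 2)
      (fun u hu => hz u (le_trans h0 hu.1))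
      (fun u hu => sq_nonneg _) hst
  have hzneg : ∀ t ≥ (0:ℝ), z t < 0 := by
    intro t ht
    have h := hreg t ht
    linarith [h.1.1, h.2]
  -- the limit of z
  have hbddA : BddAbove (z '' Set.Ici 0) := by
    refine ⟨0, ?_⟩
    rintro _ ⟨t, ht, rfl⟩
    exact (hzneg t ht).le
  have hneA : (z '' Set.Ici 0).Nonempty := ⟨z 0, ⟨0, Set.self_mem_Ici, rfl⟩⟩
  set L : ℝ := sSup (z '' Set.Ici 0) with hLdef
  have hzleL : ∀ t ≥ (0:ℝ), z t ≤ L := fun t ht => le_csSup hbddA ⟨t, ht, rfl⟩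
  have hL0 : L ≤ 0 := csSup_le hneA (by rintro _ ⟨t, ht, rfl⟩; exact (hzneg t ht).le)
  clear_value L
  have htendz : Filter.Tendsto z Filter.atTop (nhds L) := by
    rw [Metric.tendsto_atTop]
    intro ρ hρ
    obtain ⟨w, hwmem, hw⟩ := exists_lt_of_lt_csSup hneA
      (by rw [← hLdef]; linarith : L - ρ < sSup (z '' Set.Ici 0))
    obtain ⟨t₀, ht₀, rfl⟩ := hwmem
    refine ⟨max t₀ 0, fun t ht => ?_⟩
    have ht0 : (0:ℝ) ≤ t := le_trans (le_max_right t₀ 0) ht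
    have h1 : z t₀ ≤ z t := hzmono t₀ t ht₀ (le_trans (le_max_left t₀ 0) ht)
    have h2 : z t ≤ L := hzleL t ht0
    rw [Real.dist_eq, abs_lt]
    constructor <;> linarith
  -- the limit of S = y + z
  set m : ℝ := ε * c * L / (1 + ε * c) with hmdef
  clear_value m
  have hSder : ∀ t ≥ (0:ℝ), HasDerivAt (fun u => y u + z u) (-(y t + z t) - ε * c * y t) t := by
    intro t ht
    have := (hy t ht).add (hz t ht)
    refine this.congr_deriv ?_
    ring
  have htendS : Filter.Tendsto (fun t => y t + z t) Filter.atTop (nhds m) := by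
    rw [Metric.tendsto_atTop]
    intro ρ hρ
    set δ : ℝ := ρ / 2 * ((1 + ε * c) / (ε * c + 1)) with hδdef
    have hδpos : 0 < δ := by
      apply mul_pos (by linarith)
      exact div_pos hk (by linarith)
    have hhalf : ε * c * δ / (1 + ε * c) ≤ ρ / 2 := by
      rw [hδdef]
      rw [div_le_iff₀ hk]
      have h1 : (1 + ε * c) / (ε * c + 1) = 1 := by
        rw [div_eq_one_iff_eq (by linarith)]; ring
      rw [h1]
      nlinarith
    obtain ⟨T₀, hT₀⟩ := Metric.tendsto_atTop.1 htendz δ hδpos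
    set T : ℝ := max T₀ 0 with hTdef
    have hT0 : (0:ℝ) ≤ T := by rw [hTdef]; exact le_max_right T₀ 0
    have hTz : ∀ t ≥ T, L - δ < z t := by
      intro t ht
      have hTle : T₀ ≤ T := by rw [hTdef]; exact le_max_left T₀ 0
      have := hT₀ t (le_trans hTle ht)
      rw [Real.dist_eq, abs_lt] at this
      linarith [this.1]
    set V : ℝ → ℝ := fun t => Real.exp ((1 + ε * c) * t) * (y t + z t - m) with hVdef
    have hVder : ∀ t ≥ (0:ℝ),
        HasDerivAt V (Real.exp ((1 + ε * c) * t) * (ε * c * (z t - L))) t := by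
      intro t ht
      have hE : HasDerivAt (fun u => Real.exp ((1 + ε * c) * u))
          (Real.exp ((1 + ε * c) * t) * (1 + ε * c)) t := by
        have := ((hasDerivAt_id t).const_mul (1 + ε * c)).exp
        simpa using this
      have hS : HasDerivAt (fun u => y u + z u - m) (-(y t + z t) - ε * c * y t) t :=
        (hSder t ht).sub_const m
      have := hE.mul hS
      refine this.congr_deriv ?_
      have hkm : (1 + ε * c) * m = ε * c * L := by
        rw [hmdef]; field_simp
      linear_combination (-Real.exp ((1 + ε * c) * t)) * hkm
    -- V is nonincreasing on [0, ∞)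
    have hVanti : ∀ s t : ℝ, 0 ≤ s → s ≤ t → V t ≤ V s := by
      intro s t h0 hst
      apply auxAnti (f' := fun u => Real.exp ((1 + ε * c) * u) * (ε * c * (z u - L)))
        (fun u hu => hVder u (le_trans h0 hu.1))
        (fun u hu => ?_) hst
      have h1 : z u ≤ L := hzleL u (le_trans h0 hu.1)
      exact mul_nonpos_of_nonneg_of_nonpos (Real.exp_pos _).le
        (mul_nonpos_of_nonneg_of_nonpos hεc (by linarith))
    set U : ℝ → ℝ := fun t => V t + ε * c * δ / (1 + ε * c) * Real.exp ((1 + ε * c) * t)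
      with hUdef
    have hUmono : ∀ t ≥ T, U T ≤ U t := by
      intro t ht
      apply auxMono (f' := fun u =>
        Real.exp ((1 + ε * c) * u) * (ε * c * (z u - L)) +
          ε * c * δ / (1 + ε * c) * (Real.exp ((1 + ε * c) * u) * (1 + ε * c)))
        (fun u hu => ?_) (fun u hu => ?_) ht
      · have hE : HasDerivAt (fun w => Real.exp ((1 + ε * c) * w))
            (Real.exp ((1 + ε * c) * u) * (1 + ε * c)) u := by
          have := ((hasDerivAt_id u).const_mul (1 + ε * c)).exp
          simpa using this
        exact (hVder u (le_trans hT0 hu.1)).add (hE.const_mul _)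
      · have h1 : L - δ < z u := hTz u hu.1
        have hexp := (Real.exp_pos ((1 + ε * c) * u)).le
        have key : Real.exp ((1 + ε * c) * u) * (ε * c * (z u - L)) +
            ε * c * δ / (1 + ε * c) * (Real.exp ((1 + ε * c) * u) * (1 + ε * c)) =
            Real.exp ((1 + ε * c) * u) * (ε * c * (z u - L + δ)) := by
          field_simp
        have hpos : 0 ≤ Real.exp ((1 + ε * c) * u) * (ε * c * (z u - L + δ)) :=
          mul_nonneg hexp (mul_nonneg hεc (by linarith))
        exact le_of_le_of_eq hpos key.symm
    set C : ℝ := max |V T| |U T| with hCdef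
    have hC0 : 0 ≤ C := le_trans (abs_nonneg _) (le_max_left _ _)
    have hinv : ∀ x : ℝ, Real.exp (-x) * Real.exp x = 1 := fun x => by
      rw [← Real.exp_add]; simp
    clear_value V U C δ T
    have hbound : ∀ t ≥ T, |y t + z t - m| ≤ Real.exp (-((1 + ε * c) * t)) * C + ρ / 2 := by
      intro t ht
      have htt0 : (0:ℝ) ≤ t := le_trans hT0 ht
      have hexppos := Real.exp_pos ((1 + ε * c) * t)
      have hexpnegpos := Real.exp_pos (-((1 + ε * c) * t))
      have hSm : y t + z t - m = Real.exp (-((1 + ε * c) * t)) * V t := by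
        rw [hVdef]
        simp only []
        rw [← mul_assoc, hinv, one_mul]
      rw [abs_le]
      constructor
      · -- lower bound via U
        have h1 : U T ≤ U t := hUmono t ht
        have h2 : V t = U t - ε * c * δ / (1 + ε * c) * Real.exp ((1 + ε * c) * t) := by
          rw [hUdef]; ring
        have h3 : U T - ε * c * δ / (1 + ε * c) * Real.exp ((1 + ε * c) * t) ≤ V t := by
          rw [h2]; exact sub_le_sub_right h1 _
        have h4 : y t + z t - m ≥ Real.exp (-((1 + ε * c) * t)) * U T - ε * c * δ / (1 + ε * c) := by
          rw [hSm]
          have hmul := mul_le_mul_of_nonneg_left h3 hexpnegpos.le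
          calc Real.exp (-((1 + ε * c) * t)) * V t
              ≥ Real.exp (-((1 + ε * c) * t)) *
                (U T - ε * c * δ / (1 + ε * c) * Real.exp ((1 + ε * c) * t)) := hmul
            _ = Real.exp (-((1 + ε * c) * t)) * U T -
                ε * c * δ / (1 + ε * c) * (Real.exp (-((1 + ε * c) * t)) *
                  Real.exp ((1 + ε * c) * t)) := by ring
            _ = Real.exp (-((1 + ε * c) * t)) * U T - ε * c * δ / (1 + ε * c) := by
                rw [hinv]; ring
        have h5 : Real.exp (-((1 + ε * c) * t)) * U T ≥ -(Real.exp (-((1 + ε * c) * t)) * C) := by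
          have : U T ≥ -C := by
            have := neg_abs_le (U T)
            have hle : |U T| ≤ C := by rw [hCdef]; exact le_max_right _ _
            linarith
          nlinarith
        calc -(Real.exp (-((1 + ε * c) * t)) * C + ρ / 2)
            = -(Real.exp (-((1 + ε * c) * t)) * C) - ρ / 2 := by ring
          _ ≤ Real.exp (-((1 + ε * c) * t)) * U T - ρ / 2 := by linarith
          _ ≤ Real.exp (-((1 + ε * c) * t)) * U T - ε * c * δ / (1 + ε * c) := by linarith
          _ ≤ y t + z t - m := by linarith
      · -- upper bound via V
        have h1 : V t ≤ V T := hVanti T t hT0 ht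
        have h2 : V T ≤ C := le_trans (le_abs_self _)
          (by rw [hCdef]; exact le_max_left _ _)
        have h3 : y t + z t - m ≤ Real.exp (-((1 + ε * c) * t)) * C := by
          rw [hSm]
          nlinarith
        have : (0:ℝ) ≤ ρ / 2 := by linarith
        linarith
    -- tail tends to zero
    have htail : Filter.Tendsto (fun t => Real.exp (-((1 + ε * c) * t)) * C)
        Filter.atTop (nhds 0) := by
      have h1 : Filter.Tendsto (fun t : ℝ => (1 + ε * c) * t) Filter.atTop Filter.atTop :=
        Filter.Tendsto.const_mul_atTop hk Filter.tendsto_id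
      have h2 : Filter.Tendsto (fun t : ℝ => -((1 + ε * c) * t)) Filter.atTop Filter.atBot :=
        Filter.tendsto_neg_atBot_iff.mpr h1
      have h3 : Filter.Tendsto (fun t : ℝ => Real.exp (-((1 + ε * c) * t)))
          Filter.atTop (nhds 0) := Real.tendsto_exp_atBot.comp h2
      have := h3.mul_const C
      simpa using this
    obtain ⟨N₀, hN₀⟩ := Filter.eventually_atTop.1
      (htail.eventually_lt_const (by linarith : (0:ℝ) < ρ / 2))
    refine ⟨max N₀ T, fun t ht => ?_⟩
    have h1 := hbound t (le_trans (le_max_right N₀ T) ht)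
    have h2 := hN₀ t (le_trans (le_max_left N₀ T) ht)
    rw [Real.dist_eq]
    calc |y t + z t - m| ≤ Real.exp (-((1 + ε * c) * t)) * C + ρ / 2 := h1
      _ < ρ / 2 + ρ / 2 := by linarith
      _ = ρ := by ring
  -- limit of y
  have htendy : Filter.Tendsto y Filter.atTop (nhds (m - L)) := by
    have := htendS.sub htendz
    simpa using this
  -- L must be 0
  have hLzero : L = 0 := by
    by_contra hne
    have hL' : L < 0 := lt_of_le_of_ne hL0 hne
    have hmL : m - L = -L / (1 + ε * c) := by
      rw [hmdef]; field_simp; ring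
    have hr : 0 < (m - L) / 2 := by
      rw [hmL]
      have : 0 < -L := by linarith
      positivity
    set r : ℝ := (m - L) / 2 with hrdef
    clear_value r
    obtain ⟨T₁', hT₁'⟩ := Filter.eventually_atTop.1
      (htendy.eventually_const_lt (by linarith : r < m - L))
    set T₁ : ℝ := max T₁' 0 with hT₁def
    have hT₁0 : (0:ℝ) ≤ T₁ := by rw [hT₁def]; exact le_max_right _ _
    have hygt : ∀ t ≥ T₁, r < y t := by
      intro t ht
      have hTle : T₁' ≤ T₁ := by rw [hT₁def]; exact le_max_left _ _
      exact hT₁' t (le_trans hTle ht)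
    clear_value T₁
    have hgrow : ∀ t ≥ T₁, z T₁ + r ^ 2 * (t - T₁) ≤ z t := by
      intro t ht
      have := auxMono (a := T₁) (b := t) (f := fun u => z u - r ^ 2 * u)
        (f' := fun u => (y u) ^ 2 - r ^ 2)
        (fun u hu => by
          have h1 := hz u (le_trans hT₁0 hu.1)
          have h2 : HasDerivAt (fun w : ℝ => r ^ 2 * w) (r ^ 2) u := by
            simpa using (hasDerivAt_id u).const_mul (r ^ 2)
          exact h1.sub h2)
        (fun u hu => by
          have h1 : r < y u := hygt u hu.1
          have h2 : 0 ≤ r := hr.le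
          show 0 ≤ y u ^ 2 - r ^ 2
          nlinarith)
        ht
      have this' : z T₁ - r ^ 2 * T₁ ≤ z t - r ^ 2 * t := this
      linarith
    set tb : ℝ := T₁ + (|z T₁| + 1) / r ^ 2 with htbdef
    clear_value tb
    have hrt : 0 < r ^ 2 := by positivity
    have htb : T₁ ≤ tb := by
      rw [htbdef]
      have : 0 ≤ (|z T₁| + 1) / r ^ 2 := by positivity
      linarith
    have h1 := hgrow tb htb
    have h2 : r ^ 2 * (tb - T₁) = |z T₁| + 1 := by
      rw [htbdef]
      field_simp
      ring
    have h3 : 0 < z tb := by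
      rw [h2] at h1
      have := neg_abs_le (z T₁)
      linarith
    exact absurd h3 (not_lt.2 (hzneg tb (le_trans hT₁0 htb)).le)
  have hmzero : m = 0 := by rw [hmdef, hLzero]; simp
  have htendy0 : Filter.Tendsto y Filter.atTop (nhds 0) := by
    have : m - L = 0 := by rw [hmzero, hLzero]; ring
    rwa [this] at htendy
  have htendz0 : Filter.Tendsto z Filter.atTop (nhds 0) := by rwa [hLzero] at htendz
  exact htendy0.prodMk_nhds htendz0

/-- Global forward existence for a bounded, globally Lipschitz autonomous field. -/
private lemma auxGlobal {E : Type*} [NormedAddCommGroup E] [NormedSpace ℝ E] [CompleteSpace E]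
    (F : E → E) (K : NNReal) (hlip : LipschitzWith K F) (C : ℝ)
    (hbd : ∀ x, ‖F x‖ ≤ C) (x₀ : E) :
    ∃ g : ℝ → E, g 0 = x₀ ∧ ∀ t ≥ (0 : ℝ), HasDerivAt g (F (g t)) t := by
  have hC : 0 ≤ C := le_trans (norm_nonneg _) (hbd x₀)
  -- solutions on [0, n] for each n
  have hex : ∀ n : ℕ, ∃ f : ℝ → E, f 0 = x₀ ∧
      ∀ t ∈ Set.Icc (0:ℝ) n, HasDerivWithinAt f (F (f t)) (Set.Icc (0:ℝ) n) t := by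
    intro n
    have hpl : IsPicardLindelof (fun _ x => F x) (tmin := 0) (tmax := n)
        ⟨0, le_refl 0, n.cast_nonneg⟩ x₀ (C.toNNReal * (n + 1)) 0 C.toNNReal K :=
      IsPicardLindelof.of_time_independent
        (fun x _ => le_trans (hbd x) (Real.le_coe_toNNReal C)) hlip.lipschitzOnWith
        (by
          simp only [Real.coe_toNNReal C hC, sub_zero, NNReal.coe_mul, NNReal.coe_add,
            NNReal.coe_natCast, NNReal.coe_one, NNReal.coe_zero, max_eq_left n.cast_nonneg]
          have : (n : ℝ) ≤ n + 1 := by linarith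
          nlinarith)
    exact hpl.exists_eq_forall_mem_Icc_hasDerivWithinAt₀
  choose G hG0 hGd using hex
  -- uniqueness gluing
  have huniq : ∀ a b : ℕ, a ≤ b → ∀ t ∈ Set.Icc (0:ℝ) a, G a t = G b t := by
    intro a b hab
    have hcast : (a : ℝ) ≤ b := Nat.cast_le.2 hab
    apply ODE_solution_unique (v := fun _ x => F x) (fun _ => hlip)
    · exact fun t ht => (hGd a t ht).continuousWithinAt
    · intro t ht
      exact (hGd a t (Set.Ico_subset_Icc_self ht)).mono_of_mem_nhdsWithin
        (Icc_mem_nhdsGE_of_mem ht)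
    · exact fun t ht => ((hGd b t ⟨ht.1, le_trans ht.2 hcast⟩).continuousWithinAt).mono
        (Set.Icc_subset_Icc_right hcast)
    · intro t ht
      refine (hGd b t ⟨ht.1, le_trans ht.2.le hcast⟩).mono_of_mem_nhdsWithin ?_
      exact Icc_mem_nhdsGE_of_mem ⟨ht.1, lt_of_lt_of_le ht.2 hcast⟩
    · rw [hG0 a, hG0 b]
  set v₀ : E := F x₀ with hv₀def
  set g : ℝ → E := fun t => if t < 0 then x₀ + t • v₀ else G (⌊t⌋₊ + 1) t with hgdef
  have hg0 : g 0 = x₀ := by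
    rw [hgdef]
    simp only [lt_irrefl, if_neg (lt_irrefl (0:ℝ)).elim]
    norm_num
    exact hG0 1
  -- key pointwise identification
  have hkey : ∀ (n : ℕ) (u : ℝ), 0 ≤ u → u ≤ n → g u = G n u := by
    intro n u h0 hn
    have hnotlt : ¬ u < 0 := not_lt.2 h0
    have h1 : g u = G (⌊u⌋₊ + 1) u := by rw [hgdef]; simp [hnotlt]
    have hufl : u ≤ (⌊u⌋₊ + 1 : ℕ) := by
      push_cast
      exact (Nat.lt_floor_add_one u).le
    set p : ℕ := ⌊u⌋₊ + 1 with hpdef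
    have h2 : G p u = G (max p n) u := huniq p (max p n) (le_max_left _ _)
      u ⟨h0, hufl⟩
    have h3 : G n u = G (max p n) u := huniq n (max p n) (le_max_right _ _)
      u ⟨h0, hn⟩
    rw [h1, h2, ← h3]
  have hzero : HasDerivAt g (F (g 0)) 0 := by
    have hd1' := hGd 1 0 ⟨le_refl 0, by norm_num⟩
    rw [Nat.cast_one] at hd1'
    have hd1 : HasDerivWithinAt (G 1) (F (G 1 0)) (Set.Icc (0:ℝ) 1) 0 := hd1'
    have hval1 : F (G 1 0) = F (g 0) := by
      rw [hkey 1 0 (le_refl 0) (by norm_num)]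
    have hmem : Set.Icc (0:ℝ) 1 ∈ 𝓝[Set.Ici 0] (0:ℝ) :=
      Icc_mem_nhdsGE_of_mem ⟨le_refl (0:ℝ), by norm_num⟩
    have hright' : HasDerivWithinAt (G 1) (F (g 0)) (Set.Ici 0) 0 := by
      rw [← hval1]
      exact hd1.mono_of_mem_nhdsWithin hmem
    have hright : HasDerivWithinAt g (F (g 0)) (Set.Ici 0) 0 := by
      apply hright'.congr_of_eventuallyEq
      · filter_upwards [hmem] with u hu
        exact hkey 1 u hu.1 (by exact_mod_cast hu.2)
      · rw [hg0, hG0 1]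
    have hlin : HasDerivAt (fun u : ℝ => x₀ + u • v₀) v₀ 0 := by
      have := ((hasDerivAt_id (0:ℝ)).smul_const v₀).const_add x₀
      simpa using this
    have hleft : HasDerivWithinAt g (F (g 0)) (Set.Iic 0) 0 := by
      have hgx : F (g 0) = v₀ := by rw [hg0, hv₀def]
      rw [hgx]
      apply hlin.hasDerivWithinAt.congr_of_eventuallyEq
      · filter_upwards [self_mem_nhdsWithin] with u hu
        rcases lt_or_eq_of_le (Set.mem_Iic.1 hu) with h | h
        · rw [hgdef]; simp [h]
        · rw [h, hg0]; simp
      · rw [hg0]; simp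
    have := hleft.union hright
    rw [Set.Iic_union_Ici] at this
    exact hasDerivWithinAt_univ.mp this
  refine ⟨g, hg0, ?_⟩
  intro t ht
  set n : ℕ := ⌊t⌋₊ + 1 with hndef
  have htn : t < (n : ℕ) := by
    rw [hndef]
    push_cast
    exact Nat.lt_floor_add_one t
  have hd : HasDerivWithinAt (G n) (F (G n t)) (Set.Icc (0:ℝ) n) t :=
    hGd n t ⟨ht, htn.le⟩
  have hval : F (G n t) = F (g t) := by rw [hkey n t ht htn.le]
  rcases eq_or_lt_of_le ht with h0 | hpos
  · rw [← h0]
    exact hzero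
  · -- interior point
    have hmem : Set.Icc (0:ℝ) n ∈ 𝓝 t := Icc_mem_nhds hpos htn
    have hGd' : HasDerivAt (G n) (F (g t)) t := by
      rw [← hval]
      exact hd.hasDerivAt hmem
    apply hGd'.congr_of_eventuallyEq
    filter_upwards [hmem] with u hu
    exact hkey n u hu.1 hu.2

private lemma auxClampLip (a b x x' : ℝ) :
    |max a (min x b) - max a (min x' b)| ≤ |x - x'| := by
  have h1 : |max (min x b) a - max (min x' b) a| ≤ |min x b - min x' b| :=
    abs_max_sub_max_le_abs _ _ _
  have h2 : |min x b - min x' b| ≤ max |x - x'| |b - b| := abs_min_sub_min_le_max x b x' b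
  rw [sub_self, abs_zero] at h2
  have h3 : max |x - x'| 0 = |x - x'| := max_eq_left (abs_nonneg _)
  rw [h3] at h2
  rw [max_comm a (min x b), max_comm a (min x' b)]
  exact le_trans h1 h2

private lemma auxClampMem (a b x : ℝ) (hab : a ≤ b) :
    a ≤ max a (min x b) ∧ max a (min x b) ≤ b := by
  constructor
  · exact le_max_left _ _
  · apply max_le hab (min_le_right _ _)

private lemma auxClampId (a b x : ℝ) (h1 : a ≤ x) (h2 : x ≤ b) :
    max a (min x b) = x := by
  rw [min_eq_left h2, max_eq_right h1]

/-- For the scaling-chart system y₂' = −y₂ − z₂ − y₂² − εc·y₂, z₂' = y₂² with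
ε ≥ 0, c > 0: every solution with initial value satisfying y₂(0) > 0 and
y₂(0) + z₂(0) < 0 exists for all t ≥ 0 and converges to the equilibrium (0,0).
Stated as: (i) there exists a global forward solution with these initial values
converging to (0,0), and (ii) every global forward solution with these initial
values converges to (0,0). -/
theorem chartK112_convergence_to_Q2
    (ε c : ℝ) (hε : 0 ≤ ε) (hc : 0 < c)
    (y₀ z₀ : ℝ) (hy₀ : 0 < y₀) (hsum : y₀ + z₀ < 0) :
    (∃ y z : ℝ → ℝ, y 0 = y₀ ∧ z 0 = z₀ ∧
      (∀ t ≥ (0 : ℝ), HasDerivAt y (-y t - z t - (y t) ^ 2 - ε * c * y t) t) ∧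
      (∀ t ≥ (0 : ℝ), HasDerivAt z ((y t) ^ 2) t) ∧
      Filter.Tendsto (fun t => (y t, z t)) Filter.atTop
        (nhds ((0 : ℝ), (0 : ℝ)))) ∧
    (∀ y z : ℝ → ℝ, y 0 = y₀ → z 0 = z₀ →
      (∀ t ≥ (0 : ℝ), HasDerivAt y (-y t - z t - (y t) ^ 2 - ε * c * y t) t) →
      (∀ t ≥ (0 : ℝ), HasDerivAt z ((y t) ^ 2) t) →
      Filter.Tendsto (fun t => (y t, z t)) Filter.atTop
        (nhds ((0 : ℝ), (0 : ℝ)))) := by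
  have hεc : 0 ≤ ε * c := mul_nonneg hε hc.le
  have hz₀ : z₀ < 0 := by linarith
  constructor
  · -- existence
    set M : ℝ := max y₀ (Real.sqrt (-z₀)) + 1 with hMdef
    have hM1 : 1 ≤ M := by
      have := Real.sqrt_nonneg (-z₀)
      have := le_max_right y₀ (Real.sqrt (-z₀))
      rw [hMdef]; linarith
    have hM0 : 0 < M := by linarith
    -- clamped vector field
    set cl1 : ℝ → ℝ := fun x => max (-1) (min x M) with hcl1def
    set cl2 : ℝ → ℝ := fun x => max (z₀ - 1) (min x 1) with hcl2def
    set F : ℝ × ℝ → ℝ × ℝ := fun p =>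
      (-(cl1 p.1) - cl2 p.2 - (cl1 p.1) ^ 2 - ε * c * cl1 p.1, (cl1 p.1) ^ 2) with hFdef
    set A : ℝ := max 1 M with hAdef
    set Bz : ℝ := 1 - z₀ with hBzdef
    have hA1 : 1 ≤ A := by rw [hAdef]; exact le_max_left 1 M
    have hAM : M ≤ A := by rw [hAdef]; exact le_max_right 1 M
    have hA0 : 0 < A := by linarith
    have hBz1 : 1 ≤ Bz := by rw [hBzdef]; linarith
    have hcl1mem : ∀ x : ℝ, -1 ≤ cl1 x ∧ cl1 x ≤ M := fun x =>
      auxClampMem (-1) M x (by linarith)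
    have hcl2mem : ∀ x : ℝ, z₀ - 1 ≤ cl2 x ∧ cl2 x ≤ 1 := fun x =>
      auxClampMem (z₀ - 1) 1 x (by linarith)
    have hcl1abs : ∀ x : ℝ, |cl1 x| ≤ A := by
      intro x
      rw [abs_le]
      have := hcl1mem x
      constructor
      · linarith [this.1]
      · linarith [this.2]
    have hcl2abs : ∀ x : ℝ, |cl2 x| ≤ Bz := by
      intro x
      rw [abs_le]
      have := hcl2mem x
      constructor
      · linarith [this.1]
      · linarith [this.2]
    set K0 : ℝ := 2 + 2 * A + ε * c with hK0def
    have hK00 : 0 ≤ K0 := by rw [hK0def]; linarith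
    -- Lipschitz estimate
    have hFlip : LipschitzWith K0.toNNReal F := by
      apply LipschitzWith.of_dist_le_mul
      intro p q
      rw [Real.coe_toNNReal K0 hK00]
      set D : ℝ := dist p q with hDdef
      have hD0 : 0 ≤ D := dist_nonneg
      have hd1 : |cl1 p.1 - cl1 q.1| ≤ D := by
        refine le_trans (auxClampLip _ _ _ _) ?_
        rw [← Real.dist_eq]
        rw [hDdef, Prod.dist_eq]
        exact le_max_left _ _
      have hd2 : |cl2 p.2 - cl2 q.2| ≤ D := by
        refine le_trans (auxClampLip _ _ _ _) ?_
        rw [← Real.dist_eq]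
        rw [hDdef, Prod.dist_eq]
        exact le_max_right _ _
      have hsq : |(cl1 p.1) ^ 2 - (cl1 q.1) ^ 2| ≤ 2 * A * D := by
        have hfact : (cl1 p.1) ^ 2 - (cl1 q.1) ^ 2 =
            (cl1 p.1 + cl1 q.1) * (cl1 p.1 - cl1 q.1) := by ring
        rw [hfact, abs_mul]
        have h3 : |cl1 p.1 + cl1 q.1| ≤ 2 * A :=
          le_trans (abs_add_le _ _) (by linarith [hcl1abs p.1, hcl1abs q.1])
        have := mul_le_mul h3 hd1 (abs_nonneg _) (by linarith)
        linarith
      rw [Prod.dist_eq]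
      apply max_le
      · -- first component
        rw [Real.dist_eq, hFdef]
        have hsplit : (-(cl1 p.1) - cl2 p.2 - (cl1 p.1) ^ 2 - ε * c * cl1 p.1) -
            (-(cl1 q.1) - cl2 q.2 - (cl1 q.1) ^ 2 - ε * c * cl1 q.1) =
            (-(cl1 p.1 - cl1 q.1)) + (-(cl2 p.2 - cl2 q.2)) +
              (-((cl1 p.1) ^ 2 - (cl1 q.1) ^ 2)) + (-(ε * c * (cl1 p.1 - cl1 q.1))) := by
          ring
        simp only []
        rw [hsplit]
        have i1 : |(-(cl1 p.1 - cl1 q.1)) + (-(cl2 p.2 - cl2 q.2)) +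
            (-((cl1 p.1) ^ 2 - (cl1 q.1) ^ 2)) + (-(ε * c * (cl1 p.1 - cl1 q.1)))| ≤
            |cl1 p.1 - cl1 q.1| + |cl2 p.2 - cl2 q.2| +
              |(cl1 p.1) ^ 2 - (cl1 q.1) ^ 2| + |ε * c * (cl1 p.1 - cl1 q.1)| := by
          calc |(-(cl1 p.1 - cl1 q.1)) + (-(cl2 p.2 - cl2 q.2)) +
              (-((cl1 p.1) ^ 2 - (cl1 q.1) ^ 2)) + (-(ε * c * (cl1 p.1 - cl1 q.1)))|
              ≤ |(-(cl1 p.1 - cl1 q.1)) + (-(cl2 p.2 - cl2 q.2)) +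
                (-((cl1 p.1) ^ 2 - (cl1 q.1) ^ 2))| + |(-(ε * c * (cl1 p.1 - cl1 q.1)))| :=
                abs_add_le _ _
            _ ≤ |(-(cl1 p.1 - cl1 q.1)) + (-(cl2 p.2 - cl2 q.2))| +
                |(-((cl1 p.1) ^ 2 - (cl1 q.1) ^ 2))| + |(-(ε * c * (cl1 p.1 - cl1 q.1)))| := by
                have := abs_add_le ((-(cl1 p.1 - cl1 q.1)) + (-(cl2 p.2 - cl2 q.2)))
                  (-((cl1 p.1) ^ 2 - (cl1 q.1) ^ 2))
                linarith
            _ ≤ |(-(cl1 p.1 - cl1 q.1))| + |(-(cl2 p.2 - cl2 q.2))| +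
                |(-((cl1 p.1) ^ 2 - (cl1 q.1) ^ 2))| + |(-(ε * c * (cl1 p.1 - cl1 q.1)))| := by
                have := abs_add_le (-(cl1 p.1 - cl1 q.1)) (-(cl2 p.2 - cl2 q.2))
                linarith
            _ = |cl1 p.1 - cl1 q.1| + |cl2 p.2 - cl2 q.2| +
                |(cl1 p.1) ^ 2 - (cl1 q.1) ^ 2| + |ε * c * (cl1 p.1 - cl1 q.1)| := by
                rw [abs_neg, abs_neg, abs_neg, abs_neg]
        have i2 : |ε * c * (cl1 p.1 - cl1 q.1)| ≤ ε * c * D := by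
          rw [abs_mul, abs_of_nonneg hεc]
          exact mul_le_mul_of_nonneg_left hd1 hεc
        refine le_trans i1 ?_
        rw [hK0def]
        nlinarith
      · -- second component
        rw [Real.dist_eq, hFdef]
        simp only []
        refine le_trans hsq ?_
        rw [hK0def]
        nlinarith
    -- norm bound
    set C0 : ℝ := A + Bz + A ^ 2 + ε * c * A with hC0def
    have hFbd : ∀ p : ℝ × ℝ, ‖F p‖ ≤ C0 := by
      intro p
      rw [Prod.norm_def]
      have h1 := hcl1abs p.1
      have h2 := hcl2abs p.2
      have hsq : |cl1 p.1| ^ 2 ≤ A ^ 2 := by nlinarith [abs_nonneg (cl1 p.1)]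
      apply max_le
      · rw [Real.norm_eq_abs, hFdef]
        simp only []
        have i1 : |(-(cl1 p.1) - cl2 p.2 - (cl1 p.1) ^ 2 - ε * c * cl1 p.1)| ≤
            |cl1 p.1| + |cl2 p.2| + |(cl1 p.1) ^ 2| + |ε * c * cl1 p.1| := by
          have e : (-(cl1 p.1) - cl2 p.2 - (cl1 p.1) ^ 2 - ε * c * cl1 p.1) =
              (-(cl1 p.1)) + (-(cl2 p.2)) + (-((cl1 p.1) ^ 2)) + (-(ε * c * cl1 p.1)) := by
            ring
          rw [e]
          calc |(-(cl1 p.1)) + (-(cl2 p.2)) + (-((cl1 p.1) ^ 2)) + (-(ε * c * cl1 p.1))|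
              ≤ |(-(cl1 p.1)) + (-(cl2 p.2)) + (-((cl1 p.1) ^ 2))| + |(-(ε * c * cl1 p.1))| :=
                abs_add_le _ _
            _ ≤ |(-(cl1 p.1)) + (-(cl2 p.2))| + |(-((cl1 p.1) ^ 2))| + |(-(ε * c * cl1 p.1))| := by
                have := abs_add_le ((-(cl1 p.1)) + (-(cl2 p.2))) (-((cl1 p.1) ^ 2))
                linarith
            _ ≤ |(-(cl1 p.1))| + |(-(cl2 p.2))| + |(-((cl1 p.1) ^ 2))| + |(-(ε * c * cl1 p.1))| := by
                have := abs_add_le (-(cl1 p.1)) (-(cl2 p.2))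
                linarith
            _ = |cl1 p.1| + |cl2 p.2| + |(cl1 p.1) ^ 2| + |ε * c * cl1 p.1| := by
                rw [abs_neg, abs_neg, abs_neg, abs_neg]
        refine le_trans i1 ?_
        have i2 : |(cl1 p.1) ^ 2| ≤ A ^ 2 := by
          rw [abs_of_nonneg (sq_nonneg _), ← sq_abs]
          nlinarith [abs_nonneg (cl1 p.1)]
        have i3 : |ε * c * cl1 p.1| ≤ ε * c * A := by
          rw [abs_mul, abs_of_nonneg hεc]
          exact mul_le_mul_of_nonneg_left h1 hεc
        rw [hC0def]
        linarith
      · rw [Real.norm_eq_abs, hFdef]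
        simp only []
        have i2 : |(cl1 p.1) ^ 2| ≤ A ^ 2 := by
          rw [abs_of_nonneg (sq_nonneg _), ← sq_abs]
          nlinarith [abs_nonneg (cl1 p.1)]
        rw [hC0def]
        nlinarith [abs_nonneg (cl2 p.2), mul_nonneg hεc hA0.le]
    -- global solution of the clamped field
    obtain ⟨g, hg0, hgd⟩ := auxGlobal F K0.toNNReal hFlip C0 hFbd (y₀, z₀)
    set y : ℝ → ℝ := fun t => (g t).1 with hydef
    set z : ℝ → ℝ := fun t => (g t).2 with hzdef
    have hy0 : y 0 = y₀ := by rw [hydef]; simp only []; rw [hg0]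
    have hz0 : z 0 = z₀ := by rw [hzdef]; simp only []; rw [hg0]
    have hyd : ∀ t ≥ (0:ℝ), HasDerivAt y
        (-(cl1 (y t)) - cl2 (z t) - (cl1 (y t)) ^ 2 - ε * c * cl1 (y t)) t := by
      intro t ht
      have h := (ContinuousLinearMap.fst ℝ ℝ ℝ).hasFDerivAt.comp_hasDerivAt t (hgd t ht)
      exact h
    have hzd : ∀ t ≥ (0:ℝ), HasDerivAt z ((cl1 (y t)) ^ 2) t := by
      intro t ht
      have h := (ContinuousLinearMap.snd ℝ ℝ ℝ).hasFDerivAt.comp_hasDerivAt t (hgd t ht)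
      exact h
    -- z is globally nondecreasing
    have hzmono : ∀ s t : ℝ, 0 ≤ s → s ≤ t → z s ≤ z t := by
      intro s t h0 hst
      exact auxMono (f' := fun u => (cl1 (y u)) ^ 2)
        (fun u hu => hzd u (le_trans h0 hu.1)) (fun u hu => sq_nonneg _) hst
    have hzlow : ∀ t ≥ (0:ℝ), z₀ ≤ z t := by
      intro t ht
      have := hzmono 0 t (le_refl 0) ht
      rwa [hz0] at this
    -- bootstrap: the solution stays in the region where the clamp is inactive
    have hreg : ∀ t ≥ (0:ℝ), (0 < y t ∧ y t < M) ∧ y t + z t < 0 := by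
      by_contra hcon
      push_neg at hcon
      obtain ⟨t₁, ht₁, hbad₁⟩ := hcon
      set B : Set ℝ := {t | t ∈ Set.Ici (0:ℝ) ∧
          (y t ≤ 0 ∨ M ≤ y t ∨ 0 ≤ y t + z t)} with hBdef
      have hBne : B.Nonempty := by
        refine ⟨t₁, ht₁, ?_⟩
        rcases le_or_gt (y t₁) 0 with h | h
        · exact Or.inl h
        rcases le_or_gt M (y t₁) with h' | h'
        · exact Or.inr (Or.inl h')
        · exact Or.inr (Or.inr (hbad₁ ⟨h, h'⟩))
      have hcontOn : ContinuousOn (fun t => (y t, z t)) (Set.Ici 0) := fun t ht =>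
        ((hyd t ht).continuousAt.prodMk (hzd t ht).continuousAt).continuousWithinAt
      have hBclosed : IsClosed B := by
        have : B = Set.Ici 0 ∩ (fun t => (y t, z t)) ⁻¹'
            {p : ℝ × ℝ | p.1 ≤ 0 ∨ M ≤ p.1 ∨ 0 ≤ p.1 + p.2} := by
          ext t; simp [hBdef, Set.mem_setOf_eq]
        rw [this]
        apply hcontOn.preimage_isClosed_of_isClosed isClosed_Ici
        apply IsClosed.union
        · exact isClosed_le continuous_fst continuous_const
        apply IsClosed.union
        · exact isClosed_le continuous_const continuous_fst
        · exact isClosed_le continuous_const (continuous_fst.add continuous_snd)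
      have hBbdd : BddBelow B := ⟨0, fun x hx => hx.1⟩
      set τ : ℝ := sInf B with hτdef
      have hτB : τ ∈ B := hBclosed.csInf_mem hBne hBbdd
      have hτ0 : 0 < τ := by
        rcases eq_or_lt_of_le (Set.mem_Ici.1 hτB.1) with h0 | h
        · exfalso
          have := hτB.2
          rw [← h0, hy0, hz0] at this
          rcases this with h' | h' | h'
          · linarith
          · have hyM : y₀ < M := by
              rw [hMdef]; linarith [le_max_left y₀ (Real.sqrt (-z₀))]
            linarith
          · linarith
        · exact h
      have hbefore : ∀ t, 0 ≤ t → t < τ → (0 < y t ∧ y t < M) ∧ y t + z t < 0 := by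
        intro t h0 hlt
        by_contra hn
        have htB : t ∈ B := by
          refine ⟨h0, ?_⟩
          rcases le_or_gt (y t) 0 with h | h
          · exact Or.inl h
          rcases le_or_gt M (y t) with h' | h'
          · exact Or.inr (Or.inl h')
          rcases le_or_gt 0 (y t + z t) with h'' | h''
          · exact Or.inr (Or.inr h'')
          · exact absurd ⟨⟨h, h'⟩, h''⟩ hn
        exact absurd (csInf_le hBbdd htB) (not_le.2 hlt)
      -- bounds on [0, τ]
      have hybnd : ∀ t, t ∈ Set.Icc 0 τ → 0 ≤ y t ∧ y t ≤ M := by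
        intro t ht
        rcases lt_or_eq_of_le ht.2 with h | h
        · have := hbefore t ht.1 h
          exact ⟨this.1.1.le, this.1.2.le⟩
        · rw [h]
          constructor
          · have := auxLeftLim (f := fun u => -y u) (c := 0) hτ0
              (hyd τ hτ0.le).continuousAt.neg
              (fun u h0 hlt => by
                have := (hbefore u h0 hlt).1.1
                show -y u ≤ 0
                linarith)
            simp only [neg_nonpos] at this
            linarith
          · exact auxLeftLim hτ0 (hyd τ hτ0.le).continuousAt
              (fun u h0 hlt => (hbefore u h0 hlt).1.2.le)
      have hzbnd : ∀ t, t ∈ Set.Icc 0 τ → z₀ ≤ z t ∧ z t ≤ 1 := by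
        intro t ht
        refine ⟨hzlow t ht.1, ?_⟩
        rcases lt_or_eq_of_le ht.2 with h | h
        · have h1 := hbefore t ht.1 h
          linarith [h1.1.1, h1.2]
        · rw [h]
          have := auxLeftLim (c := 0) hτ0 (hzd τ hτ0.le).continuousAt
            (fun u h0 hlt => by
              have h1 := hbefore u h0 hlt
              linarith [h1.1.1, h1.2])
          linarith
      -- the clamp is the identity along the solution on [0, τ]
      have hid : ∀ t, t ∈ Set.Icc 0 τ → cl1 (y t) = y t ∧ cl2 (z t) = z t := by
        intro t ht
        have h1 := hybnd t ht
        have h2 := hzbnd t ht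
        constructor
        · exact auxClampId _ _ _ (by linarith [h1.1]) h1.2
        · exact auxClampId _ _ _ (by linarith [h2.1]) h2.2
      -- hence the true field is solved on [0, τ]
      have hyT : ∀ t ∈ Set.Icc 0 τ, HasDerivAt y (-y t - z t - (y t) ^ 2 - ε * c * y t) t := by
        intro t ht
        have := hyd t ht.1
        rw [(hid t ht).1, (hid t ht).2] at this
        exact this
      have hzT : ∀ t ∈ Set.Icc 0 τ, HasDerivAt z ((y t) ^ 2) t := by
        intro t ht
        have := hzd t ht.1
        rw [(hid t ht).1] at this
        exact this
      have := auxInv ε c hε hc y₀ z₀ hy₀ hsum τ y z hy0 hz0 hyT hzT τ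
        ⟨hτ0.le, le_refl τ⟩
      rw [← hMdef] at this
      rcases hτB.2 with h | h | h
      · linarith [this.1.1]
      · linarith [this.1.2]
      · linarith [this.2]
    -- the clamp is globally inactive, so we have a true solution
    have hidall : ∀ t ≥ (0:ℝ), cl1 (y t) = y t ∧ cl2 (z t) = z t := by
      intro t ht
      have h1 := hreg t ht
      constructor
      · exact auxClampId _ _ _ (by linarith [h1.1.1]) h1.1.2.le
      · refine auxClampId _ _ _ (by linarith [hzlow t ht]) ?_
        have := h1.2
        have := h1.1.1
        linarith
    have hyT : ∀ t ≥ (0:ℝ), HasDerivAt y (-y t - z t - (y t) ^ 2 - ε * c * y t) t := by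
      intro t ht
      have := hyd t ht
      rw [(hidall t ht).1, (hidall t ht).2] at this
      exact this
    have hzT : ∀ t ≥ (0:ℝ), HasDerivAt z ((y t) ^ 2) t := by
      intro t ht
      have := hzd t ht
      rw [(hidall t ht).1] at this
      exact this
    exact ⟨y, z, hy0, hz0, hyT, hzT,
      auxConv ε c hε hc y₀ z₀ hy₀ hsum y z hy0 hz0 hyT hzT⟩
  · -- part (ii)
    intro y z hy0 hz0 hy hz
    exact auxConv ε c hε hc y₀ z₀ hy₀ hsum y z hy0 hz0 hy hz
end

section
/- Let c > 0 and set g(y₂, z₂) := c − y₂² − y₂z₂. For every y₂ > 0, one has g(y₂, z₂) = 0 if and only if z₂ = c/y₂ − y₂; moreover, at every such point the partial derivative ∂g/∂y₂ = −2y₂ − z₂ equals −(y₂ + c/y₂), which is at most −2√c < 0. Hence the branch {(y₂, c/y₂ − y₂) : y₂ > 0} of the critical manifold of the region-B₃ on-sphere layer problem is normally hyperbolic and attracting. -/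
/-- For c > 0 and g(y₂, z₂) = c − y₂² − y₂z₂: for every y₂ > 0, g(y₂, z₂) = 0
iff z₂ = c/y₂ − y₂; at such points the partial derivative ∂g/∂y₂ = −2y₂ − z₂
equals −(y₂ + c/y₂), which is at most −2√c < 0.  Hence the branch
{(y₂, c/y₂ − y₂) : y₂ > 0} of the region-B₃ on-sphere critical manifold is
normally hyperbolic and attracting. -/
theorem regionB3_critical_branch_attracting
    (c : ℝ) (hc : 0 < c) :
    ∀ y : ℝ, 0 < y →
      (∀ z : ℝ, c - y ^ 2 - y * z = 0 ↔ z = c / y - y) ∧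
      HasDerivAt (fun w => c - w ^ 2 - w * (c / y - y))
        (-(2 * y) - (c / y - y)) y ∧
      -(2 * y) - (c / y - y) = -(y + c / y) ∧
      -(y + c / y) ≤ -(2 * Real.sqrt c) ∧
      -(2 * Real.sqrt c) < 0 := by
  intro y hy
  have hy0 : y ≠ 0 := ne_of_gt hy
  refine ⟨?_, ?_, ?_, ?_, ?_⟩
  · intro z
    constructor
    · intro h
      field_simp
      nlinarith
    · intro h
      subst h
      field_simp
      ring
  · have h1 : HasDerivAt (fun w : ℝ => w ^ 2) (2 * y) y := by
      simpa using hasDerivAt_pow 2 y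
    have h2 : HasDerivAt (fun w : ℝ => w * (c / y - y)) (c / y - y) y := by
      simpa using (hasDerivAt_id y).mul_const (c / y - y)
    exact (((hasDerivAt_const y c).sub h1).sub h2).congr_deriv (by ring)
  · field_simp; ring
  · have hs : Real.sqrt c ^ 2 = c := Real.sq_sqrt hc.le
    have h : 2 * Real.sqrt c ≤ y + c / y := by
      rw [show y + c / y = (y * y + c) / y by field_simp, le_div_iff₀ hy]
      nlinarith [sq_nonneg (y - Real.sqrt c)]
    linarith
  · have := Real.sqrt_pos.mpr hc
    linarith
end
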